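/- arXiv:2308.12670 — 2 statements merged into one kernel-verified Lean document; each statement's English description precedes it below -/
import Mathlib

section
/- For N spare-parts warehouses with a common unknown Poisson demand rate, for every t ∈ {0,1,…,T}, every vector of net inventory levels x = (x_1,…,x_N) ∈ ℤ^N, and every k ∈ ℕ, the value function of the joint N-warehouse Markov decision process decomposes as V_t(x,k) = ∑_{i=1}^N W^i_t(x_i,k), where W^i is the two-dimensional single-warehouse value function of warehouse i. -/
open Filter

/-- Negative Binomial pmf with real shape `r` and success probability `p`:
`NB(r,p)(z) = Γ(z+r)/(Γ(r)·z!)·p^r·(1−p)^z` for `r > 0`, and `NB(0,p)` is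
the point mass at `0`. -/
noncomputable def NB (r p : ℝ) (z : ℕ) : ℝ :=
  if r = 0 then (if z = 0 then (1 : ℝ) else 0)
  else Real.Gamma ((z : ℝ) + r) / (Real.Gamma r * (Nat.factorial z : ℝ)) * p ^ r * (1 - p) ^ z

/-- `p_t = (β0 + N·t)/(β0 + N·t + 1)`. -/
noncomputable def pt (β0 : ℝ) (N t : ℕ) : ℝ :=
  (β0 + (N : ℝ) * (t : ℝ)) / (β0 + (N : ℝ) * (t : ℝ) + 1)

/-- Expectation `E_{(Z,K)}[f(Z,K)]` with `Z ~ NB(α0+k, p_t)` and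
`K ~ NB((N−1)(α0+k), p_t)` independent. -/
noncomputable def EZK (α0 β0 : ℝ) (N t k : ℕ) (f : ℕ → ℕ → ℝ) : ℝ :=
  ∑' z : ℕ, ∑' κ : ℕ,
    NB (α0 + (k : ℝ)) (pt β0 N t) z * NB (((N : ℝ) - 1) * (α0 + (k : ℝ))) (pt β0 N t) κ * f z κ

/-- Per-warehouse one-period cost of ordering up to `a` from `x` at stage `(t,k)`. -/
noncomputable def Cost (α0 β0 : ℝ) (N : ℕ) (cv ch cb : ℝ) (t : ℕ) (a x : ℤ) (k : ℕ) : ℝ :=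
  cv * ((a : ℝ) - (x : ℝ))
    + ch * ∑' z : ℕ, NB (α0 + (k : ℝ)) (pt β0 N t) z * max ((a : ℝ) - (z : ℝ)) 0
    + cb * ∑' z : ℕ, NB (α0 + (k : ℝ)) (pt β0 N t) z * max ((z : ℝ) - (a : ℝ)) 0

open scoped ENNReal

namespace SpareParts

variable {r s p : ℝ}

lemma NB_zero_left (p : ℝ) (z : ℕ) : NB 0 p z = if z = 0 then 1 else 0 := if_pos rfl

lemma NB_apply_zero (hr : 0 < r) (p : ℝ) : NB r p 0 = p ^ r := by
  have hg : Real.Gamma r ≠ 0 := (Real.Gamma_pos_of_pos hr).ne'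
  simp [NB, hr.ne', hg]

lemma NB_nonneg (hr : 0 ≤ r) (hp : 0 < p) (hp1 : p < 1) (z : ℕ) : 0 ≤ NB r p z := by
  unfold NB
  split_ifs with h h2
  · norm_num
  · norm_num
  · have hr' : 0 < r := lt_of_le_of_ne hr (Ne.symm h)
    have h1 : 0 < Real.Gamma ((z : ℝ) + r) := Real.Gamma_pos_of_pos (by positivity)
    have h2 : 0 < Real.Gamma r := Real.Gamma_pos_of_pos hr'
    have h3 : (0:ℝ) < p ^ r := Real.rpow_pos_of_pos hp r
    have h5 : (0:ℝ) < 1 - p := by linarith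
    have h4 : (0:ℝ) < (Nat.factorial z : ℝ) := by positivity
    positivity

lemma NB_pos (hr : 0 < r) (hp : 0 < p) (hp1 : p < 1) (z : ℕ) : 0 < NB r p z := by
  unfold NB
  rw [if_neg hr.ne']
  have h1 : 0 < Real.Gamma ((z : ℝ) + r) := Real.Gamma_pos_of_pos (by positivity)
  have h2 : 0 < Real.Gamma r := Real.Gamma_pos_of_pos hr
  have h3 : (0:ℝ) < p ^ r := Real.rpow_pos_of_pos hp r
  have h5 : (0:ℝ) < 1 - p := by linarith
  have h4 : (0:ℝ) < (Nat.factorial z : ℝ) := by positivity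
  positivity

lemma NB_succ (hr : 0 ≤ r) (p : ℝ) (z : ℕ) :
    ((z : ℝ) + 1) * NB r p (z + 1) = (1 - p) * ((z : ℝ) + r) * NB r p z := by
  rcases eq_or_lt_of_le hr with h | hr'
  · subst h
    cases z <;> simp [NB_zero_left]
  · simp only [NB, if_neg hr'.ne']
    have hzr : ((z : ℝ) + r) ≠ 0 := by positivity
    have hG : Real.Gamma (((z + 1 : ℕ) : ℝ) + r) = ((z : ℝ) + r) * Real.Gamma ((z : ℝ) + r) := by
      push_cast
      rw [show (z : ℝ) + 1 + r = ((z : ℝ) + r) + 1 by ring, Real.Gamma_add_one hzr]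
    rw [hG, Nat.factorial_succ]
    have hg : Real.Gamma r ≠ 0 := (Real.Gamma_pos_of_pos hr').ne'
    have hf : (Nat.factorial z : ℝ) ≠ 0 := by positivity
    have hz1 : ((z : ℝ) + 1) ≠ 0 := by positivity
    push_cast
    rw [pow_succ]
    field_simp

lemma tendsto_aux (c : ℝ) :
    Tendsto (fun n : ℕ => ((n : ℝ) + c) / ((n : ℝ) + 1)) atTop (nhds 1) := by
  have h0 : Tendsto (fun n : ℕ => 1 / ((n : ℝ) + 1)) atTop (nhds 0) :=
    tendsto_one_div_add_atTop_nhds_zero_nat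
  have h : Tendsto (fun n : ℕ => 1 + (c - 1) * (1 / ((n : ℝ) + 1))) atTop (nhds (1 + (c-1) * 0)) :=
    tendsto_const_nhds.add (h0.const_mul _)
  rw [show (1 : ℝ) + (c - 1) * 0 = 1 by ring] at h
  refine h.congr fun n => ?_
  have hz1 : ((n : ℝ) + 1) ≠ 0 := by positivity
  field_simp
  ring

lemma summable_NB_mul (hr : 0 ≤ r) (hp : 0 < p) (hp1 : p < 1) :
    Summable (fun z : ℕ => NB r p z * ((z : ℝ) + 1)) := by
  rcases eq_or_lt_of_le hr with h | hr'
  · subst h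
    apply summable_of_ne_finset_zero (s := {0})
    intro z hz
    simp only [Finset.mem_singleton] at hz
    simp [NB_zero_left, hz]
  · set f : ℕ → ℝ := fun z => NB r p z * ((z : ℝ) + 1) with hf
    have hfpos : ∀ z, 0 < f z := fun z => by
      have := NB_pos hr' hp hp1 z; positivity
    apply summable_of_ratio_test_tendsto_lt_one (l := 1 - p) (by linarith)
      (Eventually.of_forall fun n => (hfpos n).ne')
    have hratio : ∀ n : ℕ, ‖f (n + 1)‖ / ‖f n‖ =
        (1 - p) * (((n : ℝ) + r) / ((n : ℝ) + 1)) * (((n : ℝ) + 2) / ((n : ℝ) + 1)) := by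
      intro n
      rw [Real.norm_of_nonneg (hfpos _).le, Real.norm_of_nonneg (hfpos _).le]
      have key := NB_succ hr p n
      have hz1 : ((n : ℝ) + 1) ≠ 0 := by positivity
      have hNBn : NB r p n ≠ 0 := (NB_pos hr' hp hp1 n).ne'
      have hNB : NB r p (n + 1) = (1 - p) * ((n : ℝ) + r) * NB r p n / ((n : ℝ) + 1) := by
        rw [eq_div_iff hz1]; linarith [key]
      simp only [hf]
      push_cast
      rw [hNB]
      field_simp
      ring
    have h := (((tendsto_const_nhds (x := (1 - p))).mul (tendsto_aux r)).mul (tendsto_aux 2))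
    rw [show (1 - p) * 1 * 1 = 1 - p by ring] at h
    exact h.congr fun n => (hratio n).symm

lemma summable_NB (hr : 0 ≤ r) (hp : 0 < p) (hp1 : p < 1) : Summable (NB r p) := by
  refine (summable_NB_mul hr hp hp1).of_nonneg_of_le (NB_nonneg hr hp hp1) fun z => ?_
  nlinarith [NB_nonneg hr hp hp1 z, (Nat.cast_nonneg z : (0:ℝ) ≤ z)]

lemma summable_NB_mul_nat (hr : 0 ≤ r) (hp : 0 < p) (hp1 : p < 1) :
    Summable (fun z : ℕ => NB r p z * (z : ℝ)) := by
  refine (summable_NB_mul hr hp hp1).of_nonneg_of_le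
    (fun z => mul_nonneg (NB_nonneg hr hp hp1 z) (Nat.cast_nonneg z : (0:ℝ) ≤ z)) fun z => ?_
  nlinarith [NB_nonneg hr hp hp1 z, (Nat.cast_nonneg z : (0:ℝ) ≤ z)]




lemma NB_conv (hr : 0 ≤ r) (hs : 0 ≤ s) (hp : 0 < p) (hp1 : p < 1) (n : ℕ) :
    ∑ a ∈ Finset.range (n + 1), NB r p a * NB s p (n - a) = NB (r + s) p n := by
  rcases eq_or_lt_of_le hr with h | hr'
  · subst h
    rw [Finset.sum_eq_single 0]
    · simp [NB_zero_left]
    · intro a _ hne; simp [NB_zero_left, hne]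
    · intro h; exact absurd (Finset.mem_range.2 (Nat.succ_pos n)) h
  · rcases eq_or_lt_of_le hs with h | hs'
    · subst h
      rw [Finset.sum_eq_single n]
      · simp [NB_zero_left]
      · intro a ha hne
        have h0 : n - a ≠ 0 := by rw [Finset.mem_range] at ha; omega
        simp [NB_zero_left, h0]
      · intro h; exact absurd (Finset.self_mem_range_succ n) h
    · induction n with
      | zero =>
        rw [Finset.sum_range_one]
        simp only [Nat.sub_self]
        rw [NB_apply_zero hr', NB_apply_zero hs', NB_apply_zero (by linarith : (0:ℝ) < r + s),
          Real.rpow_add hp]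
      | succ n ih =>
        have hz1 : ((n : ℝ) + 1) ≠ 0 := by positivity
        have key : ((n : ℝ) + 1) * ∑ a ∈ Finset.range (n + 1 + 1), NB r p a * NB s p (n + 1 - a)
            = (1 - p) * ((n : ℝ) + (r + s))
                * ∑ a ∈ Finset.range (n + 1), NB r p a * NB s p (n - a) := by
          rw [Finset.mul_sum]
          have split : ∀ a ∈ Finset.range (n + 1 + 1),
              ((n : ℝ) + 1) * (NB r p a * NB s p (n + 1 - a))
              = (a : ℝ) * NB r p a * NB s p (n + 1 - a)
                + NB r p a * (((n + 1 - a : ℕ) : ℝ) * NB s p (n + 1 - a)) := by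
            intro a ha
            rw [Finset.mem_range] at ha
            have hc : ((n + 1 - a : ℕ) : ℝ) = (n : ℝ) + 1 - (a : ℝ) := by
              rw [Nat.cast_sub (by omega)]; push_cast; ring
            rw [hc]; ring
          rw [Finset.sum_congr rfl split, Finset.sum_add_distrib]
          have e1 : ∑ a ∈ Finset.range (n + 1 + 1), (a : ℝ) * NB r p a * NB s p (n + 1 - a)
              = ∑ a ∈ Finset.range (n + 1),
                  (1 - p) * ((a : ℝ) + r) * (NB r p a * NB s p (n - a)) := by
            rw [Finset.sum_range_succ']
            simp only [Nat.cast_zero, zero_mul, add_zero]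
            refine Finset.sum_congr rfl fun a ha => ?_
            have h1 : n + 1 - (a + 1) = n - a := by omega
            rw [h1]
            push_cast
            rw [NB_succ hr p a]
            ring
          have e2 : ∑ a ∈ Finset.range (n + 1 + 1),
                NB r p a * (((n + 1 - a : ℕ) : ℝ) * NB s p (n + 1 - a))
              = ∑ a ∈ Finset.range (n + 1),
                  (1 - p) * (((n - a : ℕ) : ℝ) + s) * (NB r p a * NB s p (n - a)) := by
            rw [Finset.sum_range_succ]
            simp only [Nat.sub_self, Nat.cast_zero, zero_mul, mul_zero, add_zero]
            refine Finset.sum_congr rfl fun a ha => ?_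
            rw [Finset.mem_range] at ha
            have h1 : n + 1 - a = (n - a) + 1 := by omega
            rw [h1]
            push_cast
            rw [NB_succ hs p (n - a)]
            ring
          rw [e1, e2, ← Finset.sum_add_distrib, Finset.mul_sum]
          refine Finset.sum_congr rfl fun a ha => ?_
          rw [Finset.mem_range] at ha
          have hc : ((n - a : ℕ) : ℝ) = (n : ℝ) - (a : ℝ) := by
            rw [Nat.cast_sub (by omega)]
          rw [hc]
          ring
        apply mul_left_cancel₀ hz1
        rw [key, ih, NB_succ (by linarith : (0:ℝ) ≤ r + s) p n]


lemma tsum_NB_one (hp : 0 < p) (hp1 : p < 1) : ∑' z : ℕ, NB 1 p z = 1 := by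
  have h : ∀ z : ℕ, NB 1 p z = p * (1 - p) ^ z := by
    intro z
    simp only [NB, one_ne_zero, if_false, Real.Gamma_nat_eq_factorial, Real.Gamma_one,
      Real.rpow_one, one_mul]
    have : (Nat.factorial z : ℝ) ≠ 0 := by positivity
    field_simp
  rw [tsum_congr h, tsum_mul_left, tsum_geometric_of_lt_one (by linarith) (by linarith)]
  have : (1 : ℝ) - (1 - p) = p := by ring
  rw [this]
  field_simp

lemma NB_le_geom (hr : 0 ≤ r) (hr1 : r ≤ 1) (hp : 0 < p) (hp1 : p < 1) :
    ∀ z : ℕ, NB r p z ≤ (1 - p) ^ z := by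
  intro z
  induction z with
  | zero =>
    rcases eq_or_lt_of_le hr with h | hr'
    · subst h; simp [NB_zero_left]
    · rw [NB_apply_zero hr', pow_zero]
      exact Real.rpow_le_one hp.le hp1.le hr'.le
  | succ z ih =>
    have key := NB_succ hr p z
    have hz : (0:ℝ) < (z : ℝ) + 1 := by positivity
    rw [← mul_le_mul_iff_right₀ hz, key, pow_succ]
    have h0 := NB_nonneg hr hp hp1 z
    have h1 : (0:ℝ) ≤ 1 - p := by linarith
    have h2 : (z:ℝ) + r ≤ (z:ℝ) + 1 := by linarith
    have h3 : (0:ℝ) ≤ (z:ℝ) + r := by positivity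
    calc (1 - p) * ((z:ℝ) + r) * NB r p z ≤ (1 - p) * ((z:ℝ) + 1) * (1 - p) ^ z := by
          apply mul_le_mul _ ih h0 (by positivity)
          apply mul_le_mul_of_nonneg_left h2 h1
      _ = ((z:ℝ) + 1) * ((1 - p) ^ z * (1 - p)) := by ring

lemma tsum_NB_le_base (hr : 0 ≤ r) (hr1 : r ≤ 1) (hp : 0 < p) (hp1 : p < 1) :
    ∑' z : ℕ, NB r p z ≤ 1 / p := by
  have hgeo : Summable (fun z : ℕ => (1 - p) ^ z) :=
    summable_geometric_of_lt_one (by linarith) (by linarith)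
  calc ∑' z : ℕ, NB r p z ≤ ∑' z : ℕ, (1 - p) ^ z :=
        Summable.tsum_le_tsum (NB_le_geom hr hr1 hp hp1) (summable_NB hr hp hp1) hgeo
    _ = (1 - (1 - p))⁻¹ := tsum_geometric_of_lt_one (by linarith) (by linarith)
    _ = 1 / p := by rw [show (1:ℝ) - (1 - p) = p by ring, one_div]

lemma tsum_NB_mul_tsum (hr : 0 ≤ r) (hs : 0 ≤ s) (hp : 0 < p) (hp1 : p < 1) :
    (∑' z : ℕ, NB r p z) * (∑' z : ℕ, NB s p z) = ∑' z : ℕ, NB (r + s) p z := by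
  have habs : ∀ {u : ℝ}, 0 ≤ u → Summable (NB u p) → Summable fun z => ‖NB u p z‖ := by
    intro u hu h
    refine h.abs.congr fun z => ?_
    rw [Real.norm_eq_abs]
  rw [Summable.tsum_mul_tsum_eq_tsum_sum_antidiagonal (summable_NB hr hp hp1) (summable_NB hs hp hp1)
    (summable_mul_of_summable_norm (habs hr (summable_NB hr hp hp1))
      (habs hs (summable_NB hs hp hp1)))]
  refine tsum_congr fun n => ?_
  rw [Finset.Nat.sum_antidiagonal_eq_sum_range_succ_mk]
  exact NB_conv hr hs hp hp1 n

lemma tsum_NB_le (hr : 0 ≤ r) (hp : 0 < p) (hp1 : p < 1) :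
    ∑' z : ℕ, NB r p z ≤ 1 / p := by
  have main : ∀ n : ℕ, ∀ u : ℝ, 0 ≤ u → u ≤ n + 1 → ∑' z : ℕ, NB u p z ≤ 1 / p := by
    intro n
    induction n with
    | zero =>
      intro u h0 h1
      exact tsum_NB_le_base h0 (by push_cast at h1; linarith) hp hp1
    | succ n ih =>
      intro u h0 h1
      by_cases hu1 : u ≤ 1
      · exact tsum_NB_le_base h0 hu1 hp hp1
      · have h2 : (0:ℝ) ≤ u - 1 := by linarith
        have h3 : u - 1 ≤ (n : ℝ) + 1 := by push_cast at h1 ⊢; linarith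
        have hmul := tsum_NB_mul_tsum h2 (zero_le_one) hp hp1
        rw [sub_add_cancel] at hmul
        rw [← hmul, tsum_NB_one hp hp1, mul_one]
        exact ih _ h2 h3
  obtain ⟨n, hn⟩ := exists_nat_ge r
  exact main n r hr (by push_cast; linarith)

lemma tsum_NB_mul_nat_le (hr : 0 ≤ r) (hp : 0 < p) (hp1 : p < 1) :
    ∑' z : ℕ, NB r p z * (z : ℝ) ≤ r / p ^ 2 := by
  set m1 := ∑' z : ℕ, NB r p z * (z : ℝ) with hm1def
  set m0 := ∑' z : ℕ, NB r p z with hm0def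
  have hs1 := summable_NB_mul_nat hr hp hp1
  have hs0 := summable_NB hr hp hp1
  have hshift : m1 = ∑' z : ℕ, (1 - p) * (((z:ℝ) + r) * NB r p z) := by
    rw [hm1def, Summable.tsum_eq_zero_add hs1]
    simp only [Nat.cast_zero, mul_zero, zero_add]
    refine tsum_congr fun z => ?_
    have key := NB_succ hr p z
    push_cast
    nlinarith [key]
  have hsplit : ∑' z : ℕ, (1 - p) * (((z:ℝ) + r) * NB r p z) = (1 - p) * (m1 + r * m0) := by
    rw [tsum_mul_left]
    congr 1
    rw [hm1def, hm0def, ← tsum_mul_left, ← Summable.tsum_add hs1 (hs0.mul_left r)]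
    exact tsum_congr fun z => by ring
  have heq : p * m1 = (1 - p) * r * m0 := by
    have := hshift.trans hsplit
    nlinarith [this]
  have hm0le : m0 ≤ 1 / p := tsum_NB_le hr hp hp1
  have hm0nn : 0 ≤ m0 := tsum_nonneg fun z => NB_nonneg hr hp hp1 z
  have hm1nn : 0 ≤ m1 := tsum_nonneg fun z => mul_nonneg (NB_nonneg hr hp hp1 z) (Nat.cast_nonneg z)
  have hp2 : (0:ℝ) < p ^ 2 := by positivity
  have h4 : (1 - p) * r * m0 ≤ r * m0 := by nlinarith
  have h5 : r * m0 ≤ r * (1 / p) := mul_le_mul_of_nonneg_left hm0le hr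
  have h6 : p * m1 ≤ r / p := by
    rw [div_eq_mul_one_div]
    linarith
  have h7 : p * m1 * p ≤ r / p * p := mul_le_mul_of_nonneg_right h6 hp.le
  have h8 : r / p * p = r := by field_simp
  rw [le_div_iff₀ hp2]
  nlinarith [h7, h8]

noncomputable def nbE (r p : ℝ) (z : ℕ) : ℝ≥0∞ := ENNReal.ofReal (NB r p z)

/-- Real tsum of a nonnegative function as `toReal` of the `ℝ≥0∞` tsum. -/
lemma tsum_eq_toReal {ι : Type*} (f : ι → ℝ) (hf : ∀ x, 0 ≤ f x) :
    ∑' x, f x = (∑' x, ENNReal.ofReal (f x)).toReal := by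
  by_cases hs : Summable f
  · rw [← ENNReal.ofReal_tsum_of_nonneg hf hs, ENNReal.toReal_ofReal (tsum_nonneg hf)]
  · rw [tsum_eq_zero_of_not_summable hs]
    have htop : ∑' x, ENNReal.ofReal (f x) = ⊤ := by
      by_contra h
      exact hs ((ENNReal.summable_toReal h).congr fun x => ENNReal.toReal_ofReal (hf x))
    rw [htop]
    simp

lemma tsum_nbE (hr : 0 ≤ r) (hp : 0 < p) (hp1 : p < 1) :
    ∑' z : ℕ, nbE r p z = ENNReal.ofReal (∑' z : ℕ, NB r p z) :=
  (ENNReal.ofReal_tsum_of_nonneg (NB_nonneg hr hp hp1) (summable_NB hr hp hp1)).symm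

lemma tsum_nbE_le (hr : 0 ≤ r) (hp : 0 < p) (hp1 : p < 1) :
    ∑' z : ℕ, nbE r p z ≤ ENNReal.ofReal (1 / p) := by
  rw [tsum_nbE hr hp hp1]
  exact ENNReal.ofReal_le_ofReal (tsum_NB_le hr hp hp1)

lemma tsum_nbE_mul_nat_le (hr : 0 ≤ r) (hp : 0 < p) (hp1 : p < 1) :
    ∑' z : ℕ, nbE r p z * (z : ℝ≥0∞) ≤ ENNReal.ofReal (r / p ^ 2) := by
  have h : ∀ z : ℕ, nbE r p z * (z : ℝ≥0∞) = ENNReal.ofReal (NB r p z * (z : ℝ)) := by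
    intro z
    rw [ENNReal.ofReal_mul (NB_nonneg hr hp hp1 z), ENNReal.ofReal_natCast]
    rfl
  rw [tsum_congr h,
    ← ENNReal.ofReal_tsum_of_nonneg
      (fun z => mul_nonneg (NB_nonneg hr hp hp1 z) (Nat.cast_nonneg z))
      (summable_NB_mul_nat hr hp hp1)]
  exact ENNReal.ofReal_le_ofReal (tsum_NB_mul_nat_le hr hp hp1)

lemma nbE_conv (hr : 0 ≤ r) (hs : 0 ≤ s) (hp : 0 < p) (hp1 : p < 1) (n : ℕ) :
    ∑ a ∈ Finset.range (n + 1), nbE r p a * nbE s p (n - a) = nbE (r + s) p n := by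
  unfold nbE
  rw [← NB_conv hr hs hp hp1 n,
    ENNReal.ofReal_sum_of_nonneg fun a _ =>
      mul_nonneg (NB_nonneg hr hp hp1 a) (NB_nonneg hs hp hp1 _)]
  exact Finset.sum_congr rfl fun a _ => (ENNReal.ofReal_mul (NB_nonneg hr hp hp1 a)).symm

lemma tsum_tsum_nbE (hr : 0 ≤ r) (hs : 0 ≤ s) (hp : 0 < p) (hp1 : p < 1) (g : ℕ → ℝ≥0∞) :
    ∑' (z : ℕ) (κ : ℕ), nbE r p z * nbE s p κ * g (z + κ)
      = ∑' n : ℕ, nbE (r + s) p n * g n := by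
  calc ∑' (z : ℕ) (κ : ℕ), nbE r p z * nbE s p κ * g (z + κ)
      = ∑' q : ℕ × ℕ, nbE r p q.1 * nbE s p q.2 * g (q.1 + q.2) :=
        (ENNReal.tsum_prod' (f := fun q : ℕ × ℕ => nbE r p q.1 * nbE s p q.2 * g (q.1 + q.2))).symm
    _ = ∑' c : Σ n : ℕ, (Finset.HasAntidiagonal.antidiagonal n : Finset (ℕ × ℕ)),
          nbE r p (Finset.HasAntidiagonal.sigmaAntidiagonalEquivProd c).1
            * nbE s p (Finset.HasAntidiagonal.sigmaAntidiagonalEquivProd c).2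
            * g ((Finset.HasAntidiagonal.sigmaAntidiagonalEquivProd c).1
                + (Finset.HasAntidiagonal.sigmaAntidiagonalEquivProd c).2) :=
        (Finset.HasAntidiagonal.sigmaAntidiagonalEquivProd.tsum_eq
          (fun q : ℕ × ℕ => nbE r p q.1 * nbE s p q.2 * g (q.1 + q.2))).symm
    _ = ∑' (n : ℕ), ∑' x : (Finset.HasAntidiagonal.antidiagonal n : Finset (ℕ × ℕ)),
          nbE r p (Finset.HasAntidiagonal.sigmaAntidiagonalEquivProd ⟨n, x⟩).1
            * nbE s p (Finset.HasAntidiagonal.sigmaAntidiagonalEquivProd ⟨n, x⟩).2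
            * g ((Finset.HasAntidiagonal.sigmaAntidiagonalEquivProd ⟨n, x⟩).1
                + (Finset.HasAntidiagonal.sigmaAntidiagonalEquivProd ⟨n, x⟩).2) := ENNReal.tsum_sigma' _
    _ = ∑' n : ℕ, nbE (r + s) p n * g n := by
        refine tsum_congr fun n => ?_
        rw [tsum_fintype]
        have h1 : ∀ x : (Finset.HasAntidiagonal.antidiagonal n : Finset (ℕ × ℕ)),
            nbE r p (Finset.HasAntidiagonal.sigmaAntidiagonalEquivProd ⟨n, x⟩).1
              * nbE s p (Finset.HasAntidiagonal.sigmaAntidiagonalEquivProd ⟨n, x⟩).2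
              * g ((Finset.HasAntidiagonal.sigmaAntidiagonalEquivProd ⟨n, x⟩).1
                  + (Finset.HasAntidiagonal.sigmaAntidiagonalEquivProd ⟨n, x⟩).2)
            = nbE r p (x.1 : ℕ × ℕ).1 * nbE s p (x.1 : ℕ × ℕ).2 * g n := by
          rintro ⟨⟨a, b⟩, hx⟩
          have hab : a + b = n := Finset.HasAntidiagonal.mem_antidiagonal.mp hx
          simp [Finset.HasAntidiagonal.sigmaAntidiagonalEquivProd, hab]
        rw [Finset.sum_congr rfl fun x _ => h1 x, ← Finset.sum_mul,
          Finset.sum_coe_sort (Finset.HasAntidiagonal.antidiagonal n)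
            (fun q : ℕ × ℕ => nbE r p q.1 * nbE s p q.2),
          Finset.Nat.sum_antidiagonal_eq_sum_range_succ_mk, nbE_conv hr hs hp hp1]

lemma tsum_nbE_zero_mul (p : ℝ) (g : ℕ → ℝ≥0∞) : ∑' κ : ℕ, nbE 0 p κ * g κ = g 0 := by
  rw [tsum_eq_single 0]
  · simp [nbE, NB_zero_left]
  · intro κ hκ
    simp [nbE, NB_zero_left, hκ]

lemma tsum_pi_nbE (hr : 0 ≤ r) (hp : 0 < p) (hp1 : p < 1) :
    ∀ (m : ℕ) (g : ℕ → ℝ≥0∞),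
      ∑' w : Fin m → ℕ, (∏ j, nbE r p (w j)) * g (∑ j, w j)
        = ∑' κ : ℕ, nbE ((m : ℝ) * r) p κ * g κ := by
  intro m
  induction m with
  | zero =>
    intro g
    rw [tsum_eq_single (fun _ => 0) (fun w hw => absurd (Subsingleton.elim w _) hw)]
    simp only [Nat.cast_zero, zero_mul]
    rw [tsum_nbE_zero_mul]
    simp
  | succ m ih =>
    intro g
    set F : (Fin (m + 1) → ℕ) → ℝ≥0∞ :=
      fun w => (∏ j, nbE r p (w j)) * g (∑ j, w j) with hF
    have step0 : ∑' w : Fin (m + 1) → ℕ, F w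
        = ∑' (z : ℕ) (v : Fin m → ℕ), F (Fin.cons z v : Fin (m + 1) → ℕ) := by
      rw [← (Fin.consEquiv (fun _ : Fin (m + 1) => ℕ)).tsum_eq F,
        ← ENNReal.tsum_prod' (f := fun q : ℕ × (Fin m → ℕ) => F (Fin.cons q.1 q.2 : Fin (m + 1) → ℕ))]
      exact tsum_congr fun q => by simp [Fin.consEquiv]
    rw [step0]
    have h1 : ∀ (z : ℕ) (v : Fin m → ℕ),
        F (Fin.cons z v : Fin (m + 1) → ℕ)
        = nbE r p z * ((∏ j, nbE r p (v j)) * g (z + ∑ j, v j)) := by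
      intro z v
      simp only [hF, Fin.prod_univ_succ, Fin.sum_univ_succ, Fin.cons_zero, Fin.cons_succ]
      ring
    calc ∑' (z : ℕ) (v : Fin m → ℕ), F (Fin.cons z v : Fin (m + 1) → ℕ)
        = ∑' (z : ℕ), nbE r p z * ∑' v : Fin m → ℕ,
            (∏ j, nbE r p (v j)) * g (z + ∑ j, v j) := by
          refine tsum_congr fun z => ?_
          rw [← ENNReal.tsum_mul_left]
          exact tsum_congr fun v => h1 z v
      _ = ∑' (z : ℕ) (κ : ℕ), nbE r p z * (nbE ((m : ℝ) * r) p κ * g (z + κ)) := by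
          refine tsum_congr fun z => ?_
          rw [ih (fun κ => g (z + κ)), ENNReal.tsum_mul_left]
      _ = ∑' (z : ℕ) (κ : ℕ), nbE r p z * nbE ((m : ℝ) * r) p κ * g (z + κ) := by
          refine tsum_congr fun z => tsum_congr fun κ => by rw [mul_assoc]
      _ = ∑' n : ℕ, nbE (r + (m : ℝ) * r) p n * g n :=
          tsum_tsum_nbE hr (by positivity) hp hp1 g
      _ = ∑' κ : ℕ, nbE (((m + 1 : ℕ) : ℝ) * r) p κ * g κ := by
          push_cast
          rw [show r + (m : ℝ) * r = ((m : ℝ) + 1) * r by ring]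


lemma tsum_pi_marginal {N : ℕ} (hr : 0 ≤ r) (hp : 0 < p) (hp1 : p < 1) (i : Fin N)
    (g : ℕ → ℕ → ℝ≥0∞) :
    ∑' z : Fin N → ℕ, (∏ j, nbE r p (z j)) * g (z i) (∑ j, z j)
      = ∑' (z : ℕ) (κ : ℕ), nbE r p z * nbE (((N - 1 : ℕ) : ℝ) * r) p κ * g z (z + κ) := by
  classical
  set e := Equiv.funSplitAt i ℕ with he
  set F : (Fin N → ℕ) → ℝ≥0∞ := fun w => (∏ j, nbE r p (w j)) * g (w i) (∑ j, w j) with hF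
  have hprodsplit : ∀ h : Fin N → ℝ≥0∞, ∏ j, h j = h i * ∏ j : {j : Fin N // j ≠ i}, h j := by
    intro h
    rw [Fintype.prod_eq_mul_prod_compl i h]
    congr 1
    exact Finset.prod_subtype _ (fun x => by simp) h
  have hsumsplit : ∀ h : Fin N → ℕ, ∑ j, h j = h i + ∑ j : {j : Fin N // j ≠ i}, h j := by
    intro h
    rw [Fintype.sum_eq_add_sum_compl i h]
    congr 1
    exact Finset.sum_subtype _ (fun x => by simp) h
  have hFe : ∀ (z : ℕ) (w : {j : Fin N // j ≠ i} → ℕ),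
      F (e.symm (z, w)) = nbE r p z
        * ((∏ j : {j : Fin N // j ≠ i}, nbE r p (w j))
            * g z (z + ∑ j : {j : Fin N // j ≠ i}, w j)) := by
    intro z w
    have hi : e.symm (z, w) i = z := by simp [he]
    have hne : ∀ j : {j : Fin N // j ≠ i}, e.symm (z, w) (j : Fin N) = w j := by
      rintro ⟨j, hj⟩; simp [he, hj]
    rw [hF]
    simp only
    rw [hprodsplit, hsumsplit, hi]
    rw [Finset.prod_congr rfl fun j _ => congrArg (nbE r p) (hne j),
      Finset.sum_congr rfl fun j _ => hne j, mul_assoc]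
  have hcard : Fintype.card {j : Fin N // j ≠ i} = N - 1 := by
    simp [Fintype.card_subtype_compl, Fintype.card_subtype_eq]
  set e3 : Fin (N - 1) ≃ {j : Fin N // j ≠ i} := (Fintype.equivFinOfCardEq hcard).symm with he3
  calc ∑' w : Fin N → ℕ, F w
      = ∑' q : ℕ × ({j : Fin N // j ≠ i} → ℕ), F (e.symm q) := (e.symm.tsum_eq F).symm
    _ = ∑' (z : ℕ) (w : {j : Fin N // j ≠ i} → ℕ), F (e.symm (z, w)) := ENNReal.tsum_prod'
    _ = ∑' (z : ℕ), nbE r p z * ∑' w : {j : Fin N // j ≠ i} → ℕ,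
          (∏ j : {j : Fin N // j ≠ i}, nbE r p (w j))
            * g z (z + ∑ j : {j : Fin N // j ≠ i}, w j) := by
        refine tsum_congr fun z => ?_
        rw [← ENNReal.tsum_mul_left]
        exact tsum_congr fun w => hFe z w
    _ = ∑' (z : ℕ) (κ : ℕ), nbE r p z * nbE (((N - 1 : ℕ) : ℝ) * r) p κ * g z (z + κ) := by
        refine tsum_congr fun z => ?_
        have hw : ∑' w : {j : Fin N // j ≠ i} → ℕ,
            (∏ j : {j : Fin N // j ≠ i}, nbE r p (w j))
              * g z (z + ∑ j : {j : Fin N // j ≠ i}, w j)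
            = ∑' v : Fin (N - 1) → ℕ,
              (∏ u, nbE r p (v u)) * g z (z + ∑ u, v u) := by
          set e5 : ({j : Fin N // j ≠ i} → ℕ) ≃ (Fin (N - 1) → ℕ) :=
            Equiv.arrowCongr e3.symm (Equiv.refl ℕ) with he5
          rw [← e5.symm.tsum_eq]
          refine tsum_congr fun v => ?_
          have happ : ∀ j : {j : Fin N // j ≠ i}, e5.symm v j = v (e3.symm j) := by
            intro j; simp [he5, Equiv.arrowCongr]
          rw [Finset.prod_congr rfl fun j _ => congrArg (nbE r p) (happ j),
            Finset.sum_congr rfl fun j _ => happ j,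
            Equiv.prod_comp e3.symm (fun u => nbE r p (v u)),
            Equiv.sum_comp e3.symm v]
        rw [hw, tsum_pi_nbE hr hp hp1 (N - 1) (fun κ => g z (z + κ)), ← ENNReal.tsum_mul_left]
        exact tsum_congr fun κ => by rw [mul_assoc]

noncomputable def DE (r s p : ℝ) (f : ℕ → ℕ → ℝ≥0∞) : ℝ≥0∞ :=
  ∑' (z : ℕ) (κ : ℕ), nbE r p z * nbE s p κ * f z κ

lemma DE_mono {f h : ℕ → ℕ → ℝ≥0∞} (hfh : ∀ z κ, f z κ ≤ h z κ) :
    DE r s p f ≤ DE r s p h := by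
  refine ENNReal.tsum_le_tsum fun z => ENNReal.tsum_le_tsum fun κ => ?_
  exact mul_le_mul' le_rfl (hfh z κ)

lemma DE_le_ofReal (hr : 0 ≤ r) (hs : 0 ≤ s) (hp : 0 < p) (hp1 : p < 1)
    {f : ℕ → ℕ → ℝ≥0∞} {c₀ c₁ c₂ : ℝ} (h₀ : 0 ≤ c₀) (h₁ : 0 ≤ c₁) (h₂ : 0 ≤ c₂)
    (hf : ∀ z κ, f z κ ≤ ENNReal.ofReal c₀ + ENNReal.ofReal c₁ * z + ENNReal.ofReal c₂ * κ) :
    DE r s p f ≤ ENNReal.ofReal ((c₀ + c₁ * r + c₂ * s) / p ^ 3) := by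
  set S0r := ∑' z : ℕ, nbE r p z
  set S0s := ∑' z : ℕ, nbE s p z
  set S1r := ∑' z : ℕ, nbE r p z * (z : ℝ≥0∞)
  set S1s := ∑' z : ℕ, nbE s p z * (z : ℝ≥0∞)
  have key : DE r s p f ≤ ENNReal.ofReal c₀ * (S0r * S0s) + ENNReal.ofReal c₁ * (S1r * S0s)
      + ENNReal.ofReal c₂ * (S0r * S1s) := by
    refine le_trans (DE_mono hf) (le_of_eq ?_)
    unfold DE
    have hinner : ∀ z : ℕ,
        ∑' κ : ℕ, nbE r p z * nbE s p κ
            * (ENNReal.ofReal c₀ + ENNReal.ofReal c₁ * z + ENNReal.ofReal c₂ * κ)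
        = (ENNReal.ofReal c₀ + ENNReal.ofReal c₁ * z) * nbE r p z * S0s
          + ENNReal.ofReal c₂ * (nbE r p z * S1s) := by
      intro z
      have hterm : ∀ κ : ℕ, nbE r p z * nbE s p κ
            * (ENNReal.ofReal c₀ + ENNReal.ofReal c₁ * z + ENNReal.ofReal c₂ * κ)
          = (ENNReal.ofReal c₀ + ENNReal.ofReal c₁ * z) * nbE r p z * nbE s p κ
            + ENNReal.ofReal c₂ * (nbE r p z * (nbE s p κ * κ)) := by
        intro κ; ring
      rw [tsum_congr hterm, ENNReal.tsum_add, ENNReal.tsum_mul_left, ENNReal.tsum_mul_left,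
        ENNReal.tsum_mul_left, mul_assoc]
    rw [tsum_congr hinner, ENNReal.tsum_add, ENNReal.tsum_mul_left]
    have h1 : ∑' z : ℕ, (ENNReal.ofReal c₀ + ENNReal.ofReal c₁ * z) * nbE r p z * S0s
        = ENNReal.ofReal c₀ * (S0r * S0s) + ENNReal.ofReal c₁ * (S1r * S0s) := by
      have hterm : ∀ z : ℕ, (ENNReal.ofReal c₀ + ENNReal.ofReal c₁ * z) * nbE r p z * S0s
          = ENNReal.ofReal c₀ * (nbE r p z * S0s)
            + ENNReal.ofReal c₁ * (nbE r p z * (z : ℝ≥0∞) * S0s) := by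
        intro z; ring
      rw [tsum_congr hterm, ENNReal.tsum_add, ENNReal.tsum_mul_left, ENNReal.tsum_mul_left,
        ENNReal.tsum_mul_right, ENNReal.tsum_mul_right]
    rw [h1, ENNReal.tsum_mul_right]
  refine key.trans ?_
  have b1 : ENNReal.ofReal c₀ * (S0r * S0s)
      ≤ ENNReal.ofReal (c₀ * (1 / p * (1 / p))) := by
    rw [ENNReal.ofReal_mul h₀, ENNReal.ofReal_mul (by positivity)]
    exact mul_le_mul' le_rfl (mul_le_mul' (tsum_nbE_le hr hp hp1) (tsum_nbE_le hs hp hp1))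
  have b2 : ENNReal.ofReal c₁ * (S1r * S0s)
      ≤ ENNReal.ofReal (c₁ * (r / p ^ 2 * (1 / p))) := by
    rw [ENNReal.ofReal_mul h₁, ENNReal.ofReal_mul (by positivity)]
    exact mul_le_mul' le_rfl
      (mul_le_mul' (tsum_nbE_mul_nat_le hr hp hp1) (tsum_nbE_le hs hp hp1))
  have b3 : ENNReal.ofReal c₂ * (S0r * S1s)
      ≤ ENNReal.ofReal (c₂ * (1 / p * (s / p ^ 2))) := by
    rw [ENNReal.ofReal_mul h₂, ENNReal.ofReal_mul (by positivity)]
    exact mul_le_mul' le_rfl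
      (mul_le_mul' (tsum_nbE_le hr hp hp1) (tsum_nbE_mul_nat_le hs hp hp1))
  calc ENNReal.ofReal c₀ * (S0r * S0s) + ENNReal.ofReal c₁ * (S1r * S0s)
        + ENNReal.ofReal c₂ * (S0r * S1s)
      ≤ ENNReal.ofReal (c₀ * (1 / p * (1 / p))) + ENNReal.ofReal (c₁ * (r / p ^ 2 * (1 / p)))
        + ENNReal.ofReal (c₂ * (1 / p * (s / p ^ 2))) := by
        exact add_le_add (add_le_add b1 b2) b3
    _ = ENNReal.ofReal (c₀ * (1 / p * (1 / p)) + c₁ * (r / p ^ 2 * (1 / p))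
          + c₂ * (1 / p * (s / p ^ 2))) := by
        rw [← ENNReal.ofReal_add (by positivity) (by positivity),
          ← ENNReal.ofReal_add (by positivity) (by positivity)]
    _ ≤ ENNReal.ofReal ((c₀ + c₁ * r + c₂ * s) / p ^ 3) := by
        apply ENNReal.ofReal_le_ofReal
        have hp3 : (0:ℝ) < p ^ 3 := by positivity
        have e1 : c₁ * (r / p ^ 2 * (1 / p)) = c₁ * r / p ^ 3 := by ring
        have e2 : c₂ * (1 / p * (s / p ^ 2)) = c₂ * s / p ^ 3 := by ring
        have e3 : c₀ * (1 / p * (1 / p)) = c₀ / p ^ 2 := by ring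
        rw [e1, e2, e3]
        have hpow : p ^ 3 ≤ p ^ 2 := pow_le_pow_of_le_one hp.le hp1.le (by norm_num)
        have hd : 1 / p ^ 2 ≤ 1 / p ^ 3 := one_div_le_one_div_of_le hp3 hpow
        have h4 : c₀ / p ^ 2 ≤ c₀ / p ^ 3 := by
          rw [div_eq_mul_one_div, div_eq_mul_one_div c₀ (p ^ 3)]
          exact mul_le_mul_of_nonneg_left hd h₀
        have hsum : c₀ / p ^ 3 + c₁ * r / p ^ 3 + c₂ * s / p ^ 3
            = (c₀ + c₁ * r + c₂ * s) / p ^ 3 := by ring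
        linarith

lemma pt_pos {β0 : ℝ} (hβ0 : 0 < β0) (N t : ℕ) : 0 < pt β0 N t := by
  unfold pt
  have h1 : (0:ℝ) < β0 + (N : ℝ) * (t : ℝ) := by positivity
  positivity

lemma pt_lt_one {β0 : ℝ} (hβ0 : 0 < β0) (N t : ℕ) : pt β0 N t < 1 := by
  unfold pt
  have h1 : (0:ℝ) < β0 + (N : ℝ) * (t : ℝ) := by positivity
  rw [div_lt_one (by linarith)]
  linarith

/-- Conversion of the double real tsum to `toReal` of `DE`. -/
lemma tsum_tsum_eq_toReal (hr : 0 ≤ r) (hs : 0 ≤ s) (hp : 0 < p) (hp1 : p < 1)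
    (f : ℕ → ℕ → ℝ) (hf : ∀ z κ, 0 ≤ f z κ)
    (hfin : DE r s p (fun z κ => ENNReal.ofReal (f z κ)) ≠ ⊤) :
    ∑' (z : ℕ) (κ : ℕ), NB r p z * NB s p κ * f z κ
      = (DE r s p (fun z κ => ENNReal.ofReal (f z κ))).toReal := by
  have hterm : ∀ z κ : ℕ, ENNReal.ofReal (NB r p z * NB s p κ * f z κ)
      = nbE r p z * nbE s p κ * ENNReal.ofReal (f z κ) := by
    intro z κ
    rw [ENNReal.ofReal_mul (mul_nonneg (NB_nonneg hr hp hp1 z) (NB_nonneg hs hp hp1 κ)),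
      ENNReal.ofReal_mul (NB_nonneg hr hp hp1 z)]
    rfl
  have hEz : ∀ z : ℕ, (∑' κ : ℕ, NB r p z * NB s p κ * f z κ)
      = (∑' κ : ℕ, nbE r p z * nbE s p κ * ENNReal.ofReal (f z κ)).toReal := by
    intro z
    rw [tsum_eq_toReal _ (fun κ => mul_nonneg
      (mul_nonneg (NB_nonneg hr hp hp1 z) (NB_nonneg hs hp hp1 κ)) (hf z κ))]
    congr 1
    exact tsum_congr (hterm z)
  rw [tsum_congr hEz, tsum_eq_toReal _ (fun z => ENNReal.toReal_nonneg)]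
  congr 1
  refine tsum_congr fun z => ?_
  rw [ENNReal.ofReal_toReal]
  exact ne_top_of_le_ne_top hfin (ENNReal.le_tsum z)

/-- Conversion of the joint tsum over `Fin N → ℕ` to the `ℝ≥0∞` world. -/
lemma tsum_pi_eq_toReal {N : ℕ} (hr : 0 ≤ r) (hp : 0 < p) (hp1 : p < 1)
    (G : (Fin N → ℕ) → ℝ) (hG : ∀ w, 0 ≤ G w) :
    ∑' w : Fin N → ℕ, (∏ j, NB r p (w j)) * G w
      = (∑' w : Fin N → ℕ, (∏ j, nbE r p (w j)) * ENNReal.ofReal (G w)).toReal := by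
  have hprodnn : ∀ w : Fin N → ℕ, 0 ≤ ∏ j, NB r p (w j) :=
    fun w => Finset.prod_nonneg fun j _ => NB_nonneg hr hp hp1 (w j)
  rw [tsum_eq_toReal _ (fun w => mul_nonneg (hprodnn w) (hG w))]
  congr 1
  refine tsum_congr fun w => ?_
  rw [ENNReal.ofReal_mul (hprodnn w),
    ENNReal.ofReal_prod_of_nonneg fun j _ => NB_nonneg hr hp hp1 (w j)]
  rfl

lemma le_of_forall_pos_le_add' {a b : ℝ} (h : ∀ ε : ℝ, 0 < ε → a ≤ b + ε) : a ≤ b := by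
  by_contra hc
  push_neg at hc
  have := h ((a - b) / 2) (by linarith)
  linarith

/-- The infimum of a separable sum over a product feasible set splits. -/
lemma iInf_sum_split {N : ℕ} (hN : 1 ≤ N) (x : Fin N → ℤ) (g : Fin N → ℤ → ℝ)
    (hg : ∀ i b, x i ≤ b → 0 ≤ g i b) :
    (⨅ a : {a : Fin N → ℤ // ∀ i, x i ≤ a i}, ∑ i, g i (a.1 i))
      = ∑ i, ⨅ b : {b : ℤ // x i ≤ b}, g i b := by
  have hNpos : (0:ℝ) < N := by exact_mod_cast hN
  have hne : Nonempty {a : Fin N → ℤ // ∀ i, x i ≤ a i} := ⟨⟨x, fun i => le_rfl⟩⟩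
  have hnei : ∀ i : Fin N, Nonempty {b : ℤ // x i ≤ b} := fun i => ⟨⟨x i, le_rfl⟩⟩
  have hbdd : ∀ i : Fin N, BddBelow (Set.range fun b : {b : ℤ // x i ≤ b} => g i b.1) := by
    intro i
    refine ⟨0, ?_⟩
    rintro y ⟨b, rfl⟩
    exact hg i b.1 b.2
  apply le_antisymm
  · apply le_of_forall_pos_le_add'
    intro ε hε
    have hchoice : ∀ i : Fin N, ∃ b : {b : ℤ // x i ≤ b},
        g i b.1 < (⨅ b : {b : ℤ // x i ≤ b}, g i b.1) + ε / N := by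
      intro i
      apply exists_lt_of_ciInf_lt
      have : (0:ℝ) < ε / N := by positivity
      linarith
    choose bfun hbfun using hchoice
    have h1 : (⨅ a : {a : Fin N → ℤ // ∀ i, x i ≤ a i}, ∑ i, g i (a.1 i))
        ≤ ∑ i, g i ((bfun i).1) := by
      have hb : BddBelow (Set.range
          fun a : {a : Fin N → ℤ // ∀ i, x i ≤ a i} => ∑ i, g i (a.1 i)) := by
        refine ⟨0, ?_⟩
        rintro y ⟨a, rfl⟩
        exact Finset.sum_nonneg fun i _ => hg i _ (a.2 i)
      exact ciInf_le hb ⟨fun i => (bfun i).1, fun i => (bfun i).2⟩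
    refine h1.trans ?_
    have h2 : ∑ i, g i ((bfun i).1)
        ≤ ∑ i : Fin N, ((⨅ b : {b : ℤ // x i ≤ b}, g i b.1) + ε / N) :=
      Finset.sum_le_sum fun i _ => (hbfun i).le
    refine h2.trans (le_of_eq ?_)
    rw [Finset.sum_add_distrib, Finset.sum_const, Finset.card_univ, Fintype.card_fin,
      nsmul_eq_mul]
    field_simp
  · apply le_ciInf
    intro a
    refine Finset.sum_le_sum fun i _ => ?_
    exact ciInf_le (hbdd i) ⟨a.1 i, a.2 i⟩

/-- Nonnegativity of the one-period cost. -/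
lemma Cost_nonneg {α0 β0 : ℝ} (hα0 : 0 < α0) (hβ0 : 0 < β0) {N : ℕ} {cv ch cb : ℝ}
    (hcv : 0 ≤ cv) (hch : 0 ≤ ch) (hcb : 0 ≤ cb) (t : ℕ) {a x : ℤ} (hax : x ≤ a) (k : ℕ) :
    0 ≤ Cost α0 β0 N cv ch cb t a x k := by
  have hp := pt_pos hβ0 N t
  have hp1 := pt_lt_one hβ0 N t
  have hr : (0:ℝ) ≤ α0 + k := by positivity
  unfold Cost
  have h1 : (0:ℝ) ≤ (a : ℝ) - (x : ℝ) := by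
    rw [sub_nonneg]; exact_mod_cast hax
  have h2 : (0:ℝ) ≤ ∑' z : ℕ, NB (α0 + (k : ℝ)) (pt β0 N t) z * max ((a : ℝ) - (z : ℝ)) 0 :=
    tsum_nonneg fun z => mul_nonneg (NB_nonneg hr hp hp1 z) (le_max_right _ _)
  have h3 : (0:ℝ) ≤ ∑' z : ℕ, NB (α0 + (k : ℝ)) (pt β0 N t) z * max ((z : ℝ) - (a : ℝ)) 0 :=
    tsum_nonneg fun z => mul_nonneg (NB_nonneg hr hp hp1 z) (le_max_right _ _)
  positivity

/-- Upper bound for the cost of the "do nothing" action. -/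
lemma Cost_self_le {α0 β0 : ℝ} (hα0 : 0 < α0) (hβ0 : 0 < β0) {N : ℕ} {cv ch cb : ℝ}
    (hcv : 0 ≤ cv) (hch : 0 ≤ ch) (hcb : 0 ≤ cb) (t : ℕ) (x : ℤ) (k : ℕ) :
    Cost α0 β0 N cv ch cb t x x k
      ≤ (ch + cb) * (|(x : ℝ)| / pt β0 N t + (α0 + k) / pt β0 N t ^ 2) := by
  set p := pt β0 N t with hpdef
  have hp := pt_pos hβ0 N t
  have hp1 := pt_lt_one hβ0 N t
  have hr : (0:ℝ) ≤ α0 + k := by positivity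
  have hs0 := summable_NB hr hp hp1
  have hm0 := tsum_NB_le hr hp hp1
  have hm0nn : (0:ℝ) ≤ ∑' z : ℕ, NB (α0 + (k:ℝ)) p z :=
    tsum_nonneg fun z => NB_nonneg hr hp hp1 z
  have hT1 : ∑' z : ℕ, NB (α0 + (k:ℝ)) p z * max ((x : ℝ) - (z : ℝ)) 0
      ≤ |(x : ℝ)| / p := by
    have hle : ∀ z : ℕ, NB (α0 + (k:ℝ)) p z * max ((x : ℝ) - (z : ℝ)) 0
        ≤ NB (α0 + (k:ℝ)) p z * |(x : ℝ)| := by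
      intro z
      apply mul_le_mul_of_nonneg_left _ (NB_nonneg hr hp hp1 z)
      apply max_le _ (abs_nonneg _)
      have : (x : ℝ) - (z : ℝ) ≤ (x : ℝ) := by
        have : (0:ℝ) ≤ (z : ℝ) := Nat.cast_nonneg z
        linarith
      exact this.trans (le_abs_self _)
    calc ∑' z : ℕ, NB (α0 + (k:ℝ)) p z * max ((x : ℝ) - (z : ℝ)) 0
        ≤ ∑' z : ℕ, NB (α0 + (k:ℝ)) p z * |(x : ℝ)| := by
          apply Summable.tsum_le_tsum hle _ (hs0.mul_right _)
          apply Summable.of_nonneg_of_le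
            (fun z => mul_nonneg (NB_nonneg hr hp hp1 z) (le_max_right _ _)) hle
            (hs0.mul_right _)
      _ = (∑' z : ℕ, NB (α0 + (k:ℝ)) p z) * |(x : ℝ)| := tsum_mul_right
      _ ≤ (1 / p) * |(x : ℝ)| := mul_le_mul_of_nonneg_right hm0 (abs_nonneg _)
      _ = |(x : ℝ)| / p := by ring
  have hT2 : ∑' z : ℕ, NB (α0 + (k:ℝ)) p z * max ((z : ℝ) - (x : ℝ)) 0
      ≤ (α0 + k) / p ^ 2 + |(x : ℝ)| / p := by
    have hle : ∀ z : ℕ, NB (α0 + (k:ℝ)) p z * max ((z : ℝ) - (x : ℝ)) 0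
        ≤ NB (α0 + (k:ℝ)) p z * ((z : ℝ) + |(x : ℝ)|) := by
      intro z
      apply mul_le_mul_of_nonneg_left _ (NB_nonneg hr hp hp1 z)
      apply max_le
      · have : -(x:ℝ) ≤ |(x:ℝ)| := neg_le_abs _
        linarith
      · positivity
    have hsum : Summable (fun z : ℕ => NB (α0 + (k:ℝ)) p z * ((z : ℝ) + |(x : ℝ)|)) := by
      have : (fun z : ℕ => NB (α0 + (k:ℝ)) p z * ((z : ℝ) + |(x : ℝ)|))
          = fun z : ℕ => NB (α0 + (k:ℝ)) p z * (z : ℝ) + NB (α0 + (k:ℝ)) p z * |(x : ℝ)| := by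
        funext z; ring
      rw [this]
      exact (summable_NB_mul_nat hr hp hp1).add (hs0.mul_right _)
    calc ∑' z : ℕ, NB (α0 + (k:ℝ)) p z * max ((z : ℝ) - (x : ℝ)) 0
        ≤ ∑' z : ℕ, NB (α0 + (k:ℝ)) p z * ((z : ℝ) + |(x : ℝ)|) := by
          apply Summable.tsum_le_tsum hle _ hsum
          exact Summable.of_nonneg_of_le
            (fun z => mul_nonneg (NB_nonneg hr hp hp1 z) (le_max_right _ _)) hle hsum
      _ = ∑' z : ℕ, (NB (α0 + (k:ℝ)) p z * (z : ℝ) + NB (α0 + (k:ℝ)) p z * |(x : ℝ)|) := by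
          exact tsum_congr fun z => by ring
      _ = (∑' z : ℕ, NB (α0 + (k:ℝ)) p z * (z : ℝ))
            + (∑' z : ℕ, NB (α0 + (k:ℝ)) p z) * |(x : ℝ)| := by
          rw [Summable.tsum_add (summable_NB_mul_nat hr hp hp1) (hs0.mul_right _), tsum_mul_right]
      _ ≤ (α0 + k) / p ^ 2 + (1 / p) * |(x : ℝ)| := by
          apply add_le_add (tsum_NB_mul_nat_le hr hp hp1)
          exact mul_le_mul_of_nonneg_right hm0 (abs_nonneg _)
      _ = (α0 + k) / p ^ 2 + |(x : ℝ)| / p := by ring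
  unfold Cost
  have hxx : cv * ((x : ℝ) - (x : ℝ)) = 0 := by ring
  rw [hxx, zero_add]
  have hT1nn : (0:ℝ) ≤ ∑' z : ℕ, NB (α0 + (k:ℝ)) p z * max ((x : ℝ) - (z : ℝ)) 0 :=
    tsum_nonneg fun z => mul_nonneg (NB_nonneg hr hp hp1 z) (le_max_right _ _)
  have hT2nn : (0:ℝ) ≤ ∑' z : ℕ, NB (α0 + (k:ℝ)) p z * max ((z : ℝ) - (x : ℝ)) 0 :=
    tsum_nonneg fun z => mul_nonneg (NB_nonneg hr hp hp1 z) (le_max_right _ _)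
  have habs : (0:ℝ) ≤ |(x:ℝ)| / p := by positivity
  have hterm : (0:ℝ) ≤ (α0 + k) / p ^ 2 := by positivity
  nlinarith [mul_le_mul_of_nonneg_left hT1 hch, mul_le_mul_of_nonneg_left hT2 hcb]

end SpareParts

open SpareParts

/-- Decomposition of the joint `N`-warehouse value function into `N`
two-dimensional single-warehouse value functions. -/
theorem decomposition_spare_parts
    (α0 β0 : ℝ) (hα0 : 0 < α0) (hβ0 : 0 < β0)
    (N T : ℕ) (hN : 1 ≤ N) (hT : 1 ≤ T)
    (cv ch cb : Fin N → ℝ) (hcv : ∀ i, 0 ≤ cv i) (hch : ∀ i, 0 < ch i) (hcb : ∀ i, 0 < cb i)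
    -- joint value function
    (V : ℕ → (Fin N → ℤ) → ℕ → ℝ)
    (hVT : ∀ x k, V T x k = 0)
    (hV : ∀ t, t < T → ∀ x k,
      V t x k = ⨅ a : {a : Fin N → ℤ // ∀ i, x i ≤ a i},
        ((∑ i, Cost α0 β0 N (cv i) (ch i) (cb i) t (a.1 i) (x i) k)
         + ∑' z : Fin N → ℕ,
             (∏ i, NB (α0 + (k : ℝ)) (pt β0 N t) (z i)) *
               V (t + 1) (fun i => a.1 i - (z i : ℤ)) (k + ∑ i, z i)))
    -- single-warehouse value functions
    (W : Fin N → ℕ → ℤ → ℕ → ℝ)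
    (hWT : ∀ i x k, W i T x k = 0)
    (hW : ∀ i t, t < T → ∀ x k,
      W i t x k = ⨅ a : {a : ℤ // x ≤ a},
        (Cost α0 β0 N (cv i) (ch i) (cb i) t a.1 x k
          + EZK α0 β0 N t k (fun z κ => W i (t + 1) (a.1 - (z : ℤ)) (k + z + κ)))) :
    ∀ t ≤ T, ∀ (x : Fin N → ℤ) (k : ℕ), V t x k = ∑ i, W i t (x i) k := by
  classical
  have hp : ∀ t, 0 < pt β0 N t := fun t => pt_pos hβ0 N t
  have hp1 : ∀ t, pt β0 N t < 1 := fun t => pt_lt_one hβ0 N t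
  have hrk : ∀ k : ℕ, (0:ℝ) ≤ α0 + k := fun k => by positivity
  have hN1 : (1:ℝ) ≤ (N:ℝ) := by exact_mod_cast hN
  have hsk : ∀ k : ℕ, (0:ℝ) ≤ ((N:ℝ) - 1) * (α0 + k) := fun k =>
    mul_nonneg (by linarith) (hrk k)
  have hNcast : ∀ k : ℕ, ((N:ℝ) - 1) * (α0 + (k:ℝ)) = (((N - 1 : ℕ)) : ℝ) * (α0 + (k:ℝ)) :=
    fun k => by rw [Nat.cast_sub hN, Nat.cast_one]
  -- downward induction principle
  have down : ∀ P : ℕ → Prop, P T → (∀ t, t < T → P (t + 1) → P t) → ∀ t, t ≤ T → P t := by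
    intro P hPT hstep
    have aux : ∀ d t, T - t = d → t ≤ T → P t := by
      intro d
      induction d with
      | zero =>
        intro t hd ht
        have ht' : t = T := by omega
        rw [ht']
        exact hPT
      | succ d ih =>
        intro t hd ht
        have hlt : t < T := by omega
        exact hstep t hlt (ih (t + 1) (by omega) (by omega))
    exact fun t ht => aux (T - t) t rfl ht
  -- EZK nonneg
  have EZKnn : ∀ t k (f : ℕ → ℕ → ℝ), (∀ z κ, 0 ≤ f z κ) → 0 ≤ EZK α0 β0 N t k f := by
    intro t k f hf
    refine tsum_nonneg fun z => tsum_nonneg fun κ => ?_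
    exact mul_nonneg (mul_nonneg (NB_nonneg (hrk k) (hp t) (hp1 t) z)
      (NB_nonneg (hsk k) (hp t) (hp1 t) κ)) (hf z κ)
  -- W nonneg
  have Wnn : ∀ t, t ≤ T → ∀ i x k, 0 ≤ W i t x k := by
    refine down (fun t => ∀ i x k, 0 ≤ W i t x k) (fun i x k => by rw [hWT]) ?_
    intro t hlt IH i x k
    rw [hW i t hlt x k]
    apply Real.iInf_nonneg
    intro a
    exact add_nonneg (Cost_nonneg hα0 hβ0 (hcv i) (hch i).le (hcb i).le t a.2 k)
      (EZKnn t k _ (fun z κ => IH i _ _))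
  -- DE bound
  have DEbound : ∀ t : ℕ, ∀ (k : ℕ) (i : Fin N) (b : ℤ) (L : ℝ), 0 ≤ L →
      (∀ x' k', W i (t + 1) x' k' ≤ L * (|(x' : ℝ)| + k' + 1)) →
      DE (α0 + (k:ℝ)) (((N:ℝ) - 1) * (α0 + (k:ℝ))) (pt β0 N t)
          (fun z κ => ENNReal.ofReal (W i (t + 1) (b - (z:ℤ)) (k + z + κ)))
        ≤ ENNReal.ofReal ((L * (|(b:ℝ)| + k + 1) + (2 * L) * (α0 + k)
            + L * (((N:ℝ) - 1) * (α0 + k))) / (pt β0 N t) ^ 3) := by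
    intro t k i b L hL0 hLbd
    have hc₀ : (0:ℝ) ≤ L * (|(b:ℝ)| + k + 1) := by positivity
    refine DE_le_ofReal (hrk k) (hsk k) (hp t) (hp1 t) hc₀ (by positivity) hL0 ?_
    intro z κ
    have h2 := hLbd (b - (z:ℤ)) (k + z + κ)
    have h3 : |((b - (z:ℤ) : ℤ) : ℝ)| ≤ |(b:ℝ)| + (z:ℝ) := by
      push_cast
      calc |(b:ℝ) - (z:ℝ)| ≤ |(b:ℝ)| + |(z:ℝ)| := abs_sub _ _
        _ = |(b:ℝ)| + (z:ℝ) := by rw [Nat.abs_cast]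
    have h4 : W i (t + 1) (b - (z:ℤ)) (k + z + κ)
        ≤ L * (|(b:ℝ)| + k + 1) + (2 * L) * (z:ℝ) + L * (κ:ℝ) := by
      have h5 : ((k + z + κ : ℕ) : ℝ) = (k:ℝ) + z + κ := by push_cast; ring
      rw [h5] at h2
      nlinarith [mul_le_mul_of_nonneg_left h3 hL0]
    calc ENNReal.ofReal (W i (t + 1) (b - (z:ℤ)) (k + z + κ))
        ≤ ENNReal.ofReal (L * (|(b:ℝ)| + k + 1) + (2 * L) * (z:ℝ) + L * (κ:ℝ)) :=
          ENNReal.ofReal_le_ofReal h4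
      _ = ENNReal.ofReal (L * (|(b:ℝ)| + k + 1)) + ENNReal.ofReal (2 * L) * (z:ℝ≥0∞)
            + ENNReal.ofReal L * (κ:ℝ≥0∞) := by
          rw [← ENNReal.ofReal_natCast z, ← ENNReal.ofReal_natCast κ,
            ← ENNReal.ofReal_mul (by positivity : (0:ℝ) ≤ 2 * L),
            ← ENNReal.ofReal_mul hL0,
            ← ENNReal.ofReal_add hc₀ (by positivity),
            ← ENNReal.ofReal_add (by positivity) (by positivity)]
  -- W upper bound
  have Wbd : ∀ t, t ≤ T → ∃ L : ℝ, 0 ≤ L ∧ ∀ i x k, W i t x k ≤ L * (|(x:ℝ)| + k + 1) := by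
    refine down _ ⟨0, le_rfl, fun i x k => by rw [hWT]; simp⟩ ?_
    rintro t hlt ⟨L, hL0, hLbd⟩
    have hppos := hp t
    have hplt := hp1 t
    set q := pt β0 N t with hq
    have hq2 : (0:ℝ) < q ^ 2 := by positivity
    have hq3 : (0:ℝ) < q ^ 3 := by positivity
    set CC : ℝ := ∑ i, (ch i + cb i) with hCC
    have hCCnn : 0 ≤ CC :=
      Finset.sum_nonneg fun i _ => by
        show (0:ℝ) ≤ ch i + cb i
        linarith [hch i, hcb i]
    have hCCi : ∀ i, ch i + cb i ≤ CC := fun i =>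
      Finset.single_le_sum (f := fun i => ch i + cb i)
        (fun j _ => by
          show (0:ℝ) ≤ ch j + cb j
          linarith [hch j, hcb j]) (Finset.mem_univ i)
    set A : ℝ := CC * (1 / q + (α0 + 1) / q ^ 2) with hA
    have hAnn : 0 ≤ A := by positivity
    set L' : ℝ := A + L * (1 + ((N:ℝ) + 1) * (α0 + 1)) / q ^ 3 with hL'
    have hL'nn : 0 ≤ L' := by positivity
    refine ⟨L', hL'nn, ?_⟩
    intro i x k
    set D : ℝ := |(x:ℝ)| + k + 1 with hD
    have hD1 : (1:ℝ) ≤ D := by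
      have := abs_nonneg (x:ℝ); have := Nat.cast_nonneg (α := ℝ) k; simp only [hD]; linarith
    have hDk : (k:ℝ) + 1 ≤ D := by have := abs_nonneg (x:ℝ); simp only [hD]; linarith
    have hDx : |(x:ℝ)| ≤ D := by have : (0:ℝ) ≤ (k:ℝ) := Nat.cast_nonneg k; simp only [hD]; linarith
    have hak : α0 + (k:ℝ) ≤ (α0 + 1) * D := by nlinarith
    -- value of the feasible action a = x
    have hWle : W i t x k ≤ Cost α0 β0 N (cv i) (ch i) (cb i) t x x k
        + EZK α0 β0 N t k (fun z κ => W i (t + 1) (x - (z:ℤ)) (k + z + κ)) := by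
      rw [hW i t hlt x k]
      have hb : BddBelow (Set.range fun a : {a : ℤ // x ≤ a} =>
          Cost α0 β0 N (cv i) (ch i) (cb i) t a.1 x k
            + EZK α0 β0 N t k (fun z κ => W i (t + 1) (a.1 - (z:ℤ)) (k + z + κ))) := by
        refine ⟨0, ?_⟩
        rintro y ⟨a, rfl⟩
        exact add_nonneg (Cost_nonneg hα0 hβ0 (hcv i) (hch i).le (hcb i).le t a.2 k)
          (EZKnn t k _ fun z κ => Wnn (t + 1) (by omega) i _ _)
      exact ciInf_le hb ⟨x, le_rfl⟩
    -- the EZK term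
    have hDEle := DEbound t k i x L hL0 (hLbd i)
    have hfin : DE (α0 + (k:ℝ)) (((N:ℝ) - 1) * (α0 + (k:ℝ))) q
        (fun z κ => ENNReal.ofReal (W i (t + 1) (x - (z:ℤ)) (k + z + κ))) ≠ ⊤ :=
      ne_top_of_le_ne_top ENNReal.ofReal_ne_top hDEle
    have hEZKeq : EZK α0 β0 N t k (fun z κ => W i (t + 1) (x - (z:ℤ)) (k + z + κ))
        = (DE (α0 + (k:ℝ)) (((N:ℝ) - 1) * (α0 + (k:ℝ))) q
            (fun z κ => ENNReal.ofReal (W i (t + 1) (x - (z:ℤ)) (k + z + κ)))).toReal :=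
      tsum_tsum_eq_toReal (hrk k) (hsk k) hppos hplt _
        (fun z κ => Wnn (t + 1) (by omega) i _ _) hfin
    have hEZKle : EZK α0 β0 N t k (fun z κ => W i (t + 1) (x - (z:ℤ)) (k + z + κ))
        ≤ (L * D + (2 * L) * (α0 + k) + L * (((N:ℝ) - 1) * (α0 + k))) / q ^ 3 := by
      rw [hEZKeq]
      refine ENNReal.toReal_le_of_le_ofReal ?_ hDEle
      have h6 : (0:ℝ) ≤ L * D := by positivity
      have h7 : (0:ℝ) ≤ (2 * L) * (α0 + k) := mul_nonneg (by positivity) (hrk k)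
      have h8 : (0:ℝ) ≤ L * (((N:ℝ) - 1) * (α0 + k)) := mul_nonneg hL0 (hsk k)
      positivity
    -- arithmetic to conclude
    have hCost := Cost_self_le hα0 hβ0 (hcv i) (hch i).le (hcb i).le (N := N) t x k
    rw [← hq] at hCost
    have hc1 : |(x:ℝ)| / q + (α0 + k) / q ^ 2 ≤ D * (1 / q) + (α0 + 1) * D * (1 / q ^ 2) := by
      have b1 : |(x:ℝ)| / q ≤ D * (1 / q) := by
        rw [div_eq_mul_one_div]
        exact mul_le_mul_of_nonneg_right hDx (by positivity)
      have b2 : (α0 + k) / q ^ 2 ≤ (α0 + 1) * D * (1 / q ^ 2) := by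
        rw [div_eq_mul_one_div]
        exact mul_le_mul_of_nonneg_right hak (by positivity)
      linarith
    have hc2 : Cost α0 β0 N (cv i) (ch i) (cb i) t x x k ≤ A * D := by
      have hinn : (0:ℝ) ≤ |(x:ℝ)| / q + (α0 + k) / q ^ 2 := by positivity
      calc Cost α0 β0 N (cv i) (ch i) (cb i) t x x k
          ≤ (ch i + cb i) * (|(x:ℝ)| / q + (α0 + k) / q ^ 2) := hCost
        _ ≤ CC * (D * (1 / q) + (α0 + 1) * D * (1 / q ^ 2)) := by
            apply mul_le_mul (hCCi i) hc1 hinn hCCnn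
        _ = A * D := by rw [hA]; ring
    have hc3 : (L * D + (2 * L) * (α0 + k) + L * (((N:ℝ) - 1) * (α0 + k))) / q ^ 3
        ≤ (L * (1 + ((N:ℝ) + 1) * (α0 + 1)) / q ^ 3) * D := by
      have hnum : L * D + (2 * L) * (α0 + k) + L * (((N:ℝ) - 1) * (α0 + k))
          ≤ L * (1 + ((N:ℝ) + 1) * (α0 + 1)) * D := by
        have e1 : L * D + (2 * L) * (α0 + k) + L * (((N:ℝ) - 1) * (α0 + k))
            = L * D + L * (((N:ℝ) + 1) * (α0 + (k:ℝ))) := by ring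
        rw [e1]
        have e2 : L * (1 + ((N:ℝ) + 1) * (α0 + 1)) * D
            = L * D + L * (((N:ℝ) + 1) * ((α0 + 1) * D)) := by ring
        rw [e2]
        have h9 : ((N:ℝ) + 1) * (α0 + (k:ℝ)) ≤ ((N:ℝ) + 1) * ((α0 + 1) * D) :=
          mul_le_mul_of_nonneg_left hak (by linarith)
        have h10 : L * (((N:ℝ) + 1) * (α0 + (k:ℝ))) ≤ L * (((N:ℝ) + 1) * ((α0 + 1) * D)) :=
          mul_le_mul_of_nonneg_left h9 hL0
        linarith
      calc (L * D + (2 * L) * (α0 + k) + L * (((N:ℝ) - 1) * (α0 + k))) / q ^ 3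
          ≤ (L * (1 + ((N:ℝ) + 1) * (α0 + 1)) * D) / q ^ 3 := by
            exact (div_le_div_iff_of_pos_right hq3).mpr hnum
        _ = (L * (1 + ((N:ℝ) + 1) * (α0 + 1)) / q ^ 3) * D := by ring
    calc W i t x k ≤ Cost α0 β0 N (cv i) (ch i) (cb i) t x x k
          + EZK α0 β0 N t k (fun z κ => W i (t + 1) (x - (z:ℤ)) (k + z + κ)) := hWle
      _ ≤ A * D + (L * (1 + ((N:ℝ) + 1) * (α0 + 1)) / q ^ 3) * D := by
          exact add_le_add hc2 (hEZKle.trans hc3)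
      _ = L' * D := by rw [hL']; ring
  -- main induction
  refine down (fun t => ∀ x k, V t x k = ∑ i, W i t (x i) k) ?_ ?_
  · intro x k
    rw [hVT]
    exact (Finset.sum_eq_zero fun i _ => hWT i (x i) k).symm
  intro t hlt IH x k
  obtain ⟨L, hL0, hLbd⟩ := Wbd (t + 1) (by omega)
  have hppos := hp t
  have hplt := hp1 t
  -- the separable objective
  set g : Fin N → ℤ → ℝ := fun i b =>
    Cost α0 β0 N (cv i) (ch i) (cb i) t b (x i) k
      + EZK α0 β0 N t k (fun z κ => W i (t + 1) (b - (z : ℤ)) (k + z + κ)) with hg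
  have hfin : ∀ (i : Fin N) (b : ℤ),
      DE (α0 + (k:ℝ)) (((N:ℝ) - 1) * (α0 + (k:ℝ))) (pt β0 N t)
        (fun z κ => ENNReal.ofReal (W i (t + 1) (b - (z:ℤ)) (k + z + κ))) ≠ ⊤ :=
    fun i b => ne_top_of_le_ne_top ENNReal.ofReal_ne_top (DEbound t k i b L hL0 (hLbd i))
  have hjoint : ∀ a : {a : Fin N → ℤ // ∀ j, x j ≤ a j},
      ∑' z : Fin N → ℕ, (∏ j, NB (α0 + (k:ℝ)) (pt β0 N t) (z j))
          * V (t + 1) (fun j => a.1 j - (z j : ℤ)) (k + ∑ j, z j)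
      = ∑ i, EZK α0 β0 N t k (fun z κ => W i (t + 1) (a.1 i - (z : ℤ)) (k + z + κ)) := by
    intro a
    have hVW : ∀ z : Fin N → ℕ, V (t + 1) (fun j => a.1 j - (z j : ℤ)) (k + ∑ j, z j)
        = ∑ i, W i (t + 1) (a.1 i - (z i : ℤ)) (k + ∑ j, z j) := fun z => IH _ _
    rw [tsum_congr fun z => by rw [hVW z]]
    have hGnn : ∀ z : Fin N → ℕ,
        0 ≤ ∑ i, W i (t + 1) (a.1 i - (z i : ℤ)) (k + ∑ j, z j) :=
      fun z => Finset.sum_nonneg fun i _ => Wnn (t + 1) (by omega) i _ _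
    rw [tsum_pi_eq_toReal (hrk k) hppos hplt _ hGnn]
    have hswap : ∑' z : Fin N → ℕ, (∏ j, nbE (α0 + (k:ℝ)) (pt β0 N t) (z j))
          * ENNReal.ofReal (∑ i, W i (t + 1) (a.1 i - (z i : ℤ)) (k + ∑ j, z j))
        = ∑ i, DE (α0 + (k:ℝ)) (((N:ℝ) - 1) * (α0 + (k:ℝ))) (pt β0 N t)
            (fun z κ => ENNReal.ofReal (W i (t + 1) (a.1 i - (z:ℤ)) (k + z + κ))) := by
      have h1 : ∀ z : Fin N → ℕ,
          (∏ j, nbE (α0 + (k:ℝ)) (pt β0 N t) (z j))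
              * ENNReal.ofReal (∑ i, W i (t + 1) (a.1 i - (z i : ℤ)) (k + ∑ j, z j))
          = ∑ i, (∏ j, nbE (α0 + (k:ℝ)) (pt β0 N t) (z j))
              * ENNReal.ofReal (W i (t + 1) (a.1 i - (z i : ℤ)) (k + ∑ j, z j)) := by
        intro z
        rw [ENNReal.ofReal_sum_of_nonneg (fun i _ => Wnn (t + 1) (by omega) i _ _),
          Finset.mul_sum]
      rw [tsum_congr h1, Summable.tsum_finsetSum (fun i _ => ENNReal.summable)]
      refine Finset.sum_congr rfl fun i _ => ?_
      have hmar := tsum_pi_marginal (hrk k) hppos hplt i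
        (fun zi n => ENNReal.ofReal (W i (t + 1) (a.1 i - (zi : ℤ)) (k + n)))
      refine Eq.trans ?_ (Eq.trans hmar ?_)
      · rfl
      · unfold DE
        refine tsum_congr fun z => tsum_congr fun κ => ?_
        rw [hNcast k]
        simp only [add_assoc]
    rw [hswap, ENNReal.toReal_sum (fun i _ => hfin i (a.1 i))]
    refine Finset.sum_congr rfl fun i _ => ?_
    exact (tsum_tsum_eq_toReal (hrk k) (hsk k) hppos hplt _
      (fun z κ => Wnn (t + 1) (by omega) i _ _) (hfin i (a.1 i))).symm
  rw [hV t hlt x k]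
  have hobj : ∀ a : {a : Fin N → ℤ // ∀ j, x j ≤ a j},
      ((∑ i, Cost α0 β0 N (cv i) (ch i) (cb i) t (a.1 i) (x i) k)
        + ∑' z : Fin N → ℕ,
            (∏ j, NB (α0 + (k:ℝ)) (pt β0 N t) (z j)) *
              V (t + 1) (fun j => a.1 j - (z j : ℤ)) (k + ∑ j, z j))
      = ∑ i, g i (a.1 i) := by
    intro a
    rw [hjoint a, ← Finset.sum_add_distrib]
  rw [iInf_congr hobj, iInf_sum_split hN x g ?hgnn]
  · refine Finset.sum_congr rfl fun i _ => ?_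
    exact (hW i t hlt (x i) k).symm
  case hgnn =>
    intro i b hxb
    exact add_nonneg (Cost_nonneg hα0 hβ0 (hcv i) (hch i).le (hcb i).le t hxb k)
      (EZKnn t k _ fun z κ => Wnn (t + 1) (by omega) i _ _)
end

section
/- For each t ∈ {0,1,…,T} and each k ∈ ℕ, the single-warehouse value function W_t(·,k) is convex in the net inventory level x on ℤ: for all x ∈ ℤ, W_t(x+1,k) + W_t(x−1,k) ≥ 2·W_t(x,k). -/
open Filter

/-- One-period cost plus cost-to-go of ordering up to level `a` at stage `(t,k)`. -/
noncomputable def G (α0 β0 : ℝ) (N : ℕ) (cv ch cb : ℝ) (W : ℕ → ℤ → ℕ → ℝ)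
    (t : ℕ) (a : ℤ) (k : ℕ) : ℝ :=
  cv * (a : ℝ)
    + ch * ∑' z : ℕ, NB (α0 + (k : ℝ)) (pt β0 N t) z * max ((a : ℝ) - (z : ℝ)) 0
    + cb * ∑' z : ℕ, NB (α0 + (k : ℝ)) (pt β0 N t) z * max ((z : ℝ) - (a : ℝ)) 0
    + EZK α0 β0 N t k (fun z κ => W (t + 1) (a - (z : ℤ)) (k + z + κ))

lemma Gamma_nat_add {r : ℝ} (hr : 0 < r) (n : ℕ) :
    Real.Gamma ((n : ℝ) + r) = (∏ i ∈ Finset.range n, (r + i)) * Real.Gamma r := by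
  induction n with
  | zero => simp
  | succ n ih =>
    have h1 : ((n + 1 : ℕ) : ℝ) + r = ((n : ℝ) + r) + 1 := by push_cast; ring
    have h2 : (n : ℝ) + r ≠ 0 := by positivity
    rw [h1, Real.Gamma_add_one h2, ih, Finset.prod_range_succ]
    push_cast
    ring

lemma iteratedDeriv_one_sub_cpow (r : ℝ) (n : ℕ) :
    ∀ s : ℂ, 1 - s ∈ Complex.slitPlane →
      iteratedDeriv n (fun w : ℂ => (1 - w) ^ (-(r : ℂ))) s
        = (∏ i ∈ Finset.range n, ((r : ℂ) + i)) * (1 - s) ^ (-(r : ℂ) - n) := by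
  induction n with
  | zero => intro s hs; simp
  | succ n ih =>
    intro s hs
    have hopen : IsOpen {w : ℂ | 1 - w ∈ Complex.slitPlane} :=
      Complex.isOpen_slitPlane.preimage (by fun_prop)
    have hev : iteratedDeriv n (fun w : ℂ => (1 - w) ^ (-(r : ℂ)))
        =ᶠ[nhds s] fun w => (∏ i ∈ Finset.range n, ((r : ℂ) + i)) * (1 - w) ^ (-(r : ℂ) - n) := by
      filter_upwards [hopen.mem_nhds hs] with w hw
      exact ih w hw
    rw [iteratedDeriv_succ, hev.deriv_eq]
    have h1 : HasDerivAt (fun w : ℂ => (1 : ℂ) - w) (-1) s := (hasDerivAt_id s).const_sub 1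
    have h2 : HasDerivAt (fun w : ℂ => (1 - w) ^ (-(r : ℂ) - n))
        ((-(r : ℂ) - n) * (1 - s) ^ (-(r : ℂ) - n - 1) * (-1)) s := h1.cpow_const hs
    rw [(h2.const_mul (∏ i ∈ Finset.range n, ((r : ℂ) + i))).deriv, Finset.prod_range_succ]
    have : (-(r : ℂ) - n - 1) = (-(r : ℂ) - (n + 1 : ℕ)) := by push_cast; ring
    rw [this]
    push_cast
    ring

lemma hasSum_binomial {r q : ℝ} (hr : 0 < r) (hq0 : 0 ≤ q) (hq1 : q < 1) :
    HasSum (fun z : ℕ => Real.Gamma ((z : ℝ) + r) / (Real.Gamma r * (Nat.factorial z : ℝ)) * q ^ z)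
      ((1 - q) ^ (-r)) := by
  have hdiff : DifferentiableOn ℂ (fun w : ℂ => (1 - w) ^ (-(r : ℂ))) (Metric.ball 0 1) := by
    intro w hw
    have hw1 : 1 - w ∈ Complex.slitPlane := by
      rw [Complex.mem_slitPlane_iff]
      left
      have : |w.re| ≤ ‖w‖ := Complex.abs_re_le_norm w
      have hw' : ‖w‖ < 1 := by simpa [Complex.dist_eq] using Metric.mem_ball.mp hw
      simp only [Complex.sub_re, Complex.one_re]
      have : w.re ≤ |w.re| := le_abs_self _
      linarith [Complex.abs_re_le_norm w]
    exact (((differentiableAt_const (1 : ℂ)).sub differentiableAt_id).cpow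
      (differentiableAt_const _) hw1).differentiableWithinAt
  have hq : (q : ℂ) ∈ Metric.ball (0 : ℂ) 1 := by
    simp only [Metric.mem_ball, Complex.dist_eq, sub_zero]
    rw [Complex.norm_real, Real.norm_eq_abs, abs_of_nonneg hq0]
    exact hq1
  have H := Complex.hasSum_taylorSeries_on_ball hdiff hq
  have h10 : (1 : ℂ) - 0 ∈ Complex.slitPlane := by
    rw [Complex.mem_slitPlane_iff]; left; norm_num
  have hID : ∀ n : ℕ, iteratedDeriv n (fun w : ℂ => (1 - w) ^ (-(r : ℂ))) 0
      = ((Real.Gamma ((n : ℝ) + r) / Real.Gamma r : ℝ) : ℂ) := by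
    intro n
    rw [iteratedDeriv_one_sub_cpow r n 0 h10]
    rw [sub_zero, Complex.one_cpow, mul_one, Gamma_nat_add hr n]
    have hG : Real.Gamma r ≠ 0 := (Real.Gamma_pos_of_pos hr).ne'
    rw [mul_div_assoc, div_self hG, mul_one]
    push_cast
    ring
  have hfq : ((1 : ℂ) - (q : ℂ)) ^ (-(r : ℂ)) = (((1 - q) ^ (-r) : ℝ) : ℂ) := by
    rw [Complex.ofReal_cpow (by linarith) (-r)]
    push_cast
    ring_nf
  rw [hfq] at H
  have Hterm : ∀ n : ℕ, ((n.factorial : ℂ))⁻¹ • ((q : ℂ) - 0) ^ n •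
      iteratedDeriv n (fun w : ℂ => (1 - w) ^ (-(r : ℂ))) 0
      = ((Real.Gamma ((n : ℝ) + r) / (Real.Gamma r * (Nat.factorial n : ℝ)) * q ^ n : ℝ) : ℂ) := by
    intro n
    rw [hID n]
    rw [sub_zero]
    push_cast
    rw [smul_eq_mul, smul_eq_mul]
    have h2 : (n.factorial : ℂ) ≠ 0 := by exact_mod_cast Nat.factorial_ne_zero n
    field_simp
  rw [show (fun n : ℕ => ((n.factorial : ℂ))⁻¹ • ((q : ℂ) - 0) ^ n •
      iteratedDeriv n (fun w : ℂ => (1 - w) ^ (-(r : ℂ))) 0)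
      = fun n : ℕ => ((Real.Gamma ((n : ℝ) + r) / (Real.Gamma r * (Nat.factorial n : ℝ)) * q ^ n : ℝ) : ℂ)
    from funext Hterm] at H
  exact Complex.hasSum_ofReal.mp H

lemma NB_nonneg {r p : ℝ} (hr : 0 ≤ r) (hp0 : 0 < p) (hp1 : p < 1) (z : ℕ) :
    0 ≤ NB r p z := by
  rcases eq_or_lt_of_le hr with h | h
  · simp only [NB, ← h, if_true]
    split <;> norm_num
  · simp only [NB, h.ne', if_false]
    have h1 : 0 < Real.Gamma ((z : ℝ) + r) := Real.Gamma_pos_of_pos (by positivity)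
    have h2 : 0 < Real.Gamma r := Real.Gamma_pos_of_pos h
    have h3 : (0 : ℝ) < p ^ r := Real.rpow_pos_of_pos hp0 r
    have h4 : (0 : ℝ) ≤ (1 - p) ^ z := pow_nonneg (by linarith) z
    positivity

lemma NB_hasSum {r p : ℝ} (hr : 0 ≤ r) (hp0 : 0 < p) (hp1 : p < 1) :
    HasSum (NB r p) 1 := by
  rcases eq_or_lt_of_le hr with h | h
  · have : NB r p = fun z : ℕ => if z = 0 then (1 : ℝ) else 0 := by
      funext z; simp [NB, ← h]
    rw [this]
    exact hasSum_ite_eq 0 1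
  · have hb := (hasSum_binomial h (by linarith : (0:ℝ) ≤ 1 - p) (by linarith)).mul_left (p ^ r)
    have h1 : (1 : ℝ) - (1 - p) = p := by ring
    rw [h1] at hb
    have h2 : p ^ r * p ^ (-r) = 1 := by
      rw [Real.rpow_neg hp0.le]
      exact mul_inv_cancel₀ (Real.rpow_pos_of_pos hp0 r).ne'
    rw [h2] at hb
    refine (congrArg (fun f : ℕ → ℝ => HasSum f 1) (funext fun z => ?_)).mpr hb
    simp only [NB, h.ne', if_false]
    ring

lemma NB_hasSum_mul {r p : ℝ} (hr : 0 ≤ r) (hp0 : 0 < p) (hp1 : p < 1) :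
    HasSum (fun z : ℕ => (z : ℝ) * NB r p z) (r * (1 - p) / p) := by
  rcases eq_or_lt_of_le hr with h | h
  · have : (fun z : ℕ => (z : ℝ) * NB r p z) = fun _ : ℕ => (0 : ℝ) := by
      funext z
      rcases Nat.eq_zero_or_pos z with hz | hz
      · subst hz; simp
      · simp [NB, ← h, Nat.pos_iff_ne_zero.mp hz]
    rw [this, ← h]
    simpa using hasSum_zero
  · have hstep : ∀ z : ℕ, ((z + 1 : ℕ) : ℝ) * NB r p (z + 1)
        = (r * (1 - p) / p) * NB (r + 1) p z := by
      intro z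
      have hr1 : r + 1 ≠ 0 := by positivity
      simp only [NB, h.ne', hr1, if_false]
      have hc1 : ((z + 1 : ℕ) : ℝ) + r = ((z : ℝ) + (r + 1)) := by push_cast; ring
      have hc2 : Real.Gamma (r + 1) = r * Real.Gamma r := Real.Gamma_add_one h.ne'
      have hc3 : p ^ (r + 1) = p ^ r * p := by
        rw [Real.rpow_add hp0, Real.rpow_one]
      have hc4 : ((z + 1 : ℕ).factorial : ℝ) = ((z + 1 : ℝ)) * (z.factorial : ℝ) := by
        rw [Nat.factorial_succ]; push_cast; ring
      rw [hc1, hc2, hc3, hc4]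
      have hG : Real.Gamma r ≠ 0 := (Real.Gamma_pos_of_pos h).ne'
      have hf : (z.factorial : ℝ) ≠ 0 := by exact_mod_cast Nat.factorial_ne_zero z
      have hpow : (1 - p) ^ (z + 1) = (1 - p) ^ z * (1 - p) := by ring
      rw [hpow]
      push_cast
      field_simp
    have hS := (NB_hasSum (by linarith : (0:ℝ) ≤ r + 1) hp0 hp1).mul_left (r * (1 - p) / p)
    rw [mul_one] at hS
    have hS2 : HasSum (fun z : ℕ => ((z + 1 : ℕ) : ℝ) * NB r p (z + 1)) (r * (1 - p) / p) := by
      refine (congrArg (fun f : ℕ → ℝ => HasSum f (r * (1 - p) / p)) (funext fun z => ?_)).mpr hS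
      exact hstep z
    have := (hasSum_nat_add_iff (f := fun z : ℕ => (z : ℝ) * NB r p z) 1).mp (by simpa using hS2)
    simpa using this

section Helpers

lemma self_eq_max_sub (y : ℝ) : y = max y 0 - max (-y) 0 := by
  rcases le_total y 0 with h | h
  · rw [max_eq_right h, max_eq_left (by linarith)]; ring
  · rw [max_eq_left h, max_eq_right (by linarith)]; ring

lemma two_mul_max_le (y : ℝ) : 2 * max y 0 ≤ max (y + 1) 0 + max (y - 1) 0 := by
  rcases le_total y 0 with h | h
  · rcases le_total (y + 1) 0 with h1 | h1
    · rw [max_eq_right h, max_eq_right h1, max_eq_right (by linarith)]; linarith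
    · rw [max_eq_right h, max_eq_left h1, max_eq_right (by linarith)]; linarith
  · rcases le_total (y - 1) 0 with h1 | h1
    · rw [max_eq_left h, max_eq_left (by linarith), max_eq_right h1]; linarith
    · rw [max_eq_left h, max_eq_left (by linarith), max_eq_left h1]; linarith

lemma max_add_one_le (y : ℝ) : max (y + 1) 0 ≤ max y 0 + 1 := by
  rcases le_total y 0 with h | h
  · rw [max_eq_right h]
    exact max_le (by linarith) (by linarith)
  · rw [max_eq_left h, max_eq_left (by linarith)]

variable {c : ℕ → ℝ} {μ : ℝ}

lemma summable_weight (hc0 : ∀ z, 0 ≤ c z) (hS : Summable c)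
    (hμ : Summable (fun z : ℕ => (z : ℝ) * c z)) {f : ℕ → ℝ} {P Q : ℝ}
    (hb : ∀ z : ℕ, |f z| ≤ P + Q * (z : ℝ)) :
    Summable (fun z => c z * f z) := by
  refine Summable.of_norm_bounded
    ((hS.mul_left P).add (hμ.mul_left Q)) ?_
  intro z
  rw [Real.norm_eq_abs, abs_mul, abs_of_nonneg (hc0 z)]
  calc c z * |f z| ≤ c z * (P + Q * z) := mul_le_mul_of_nonneg_left (hb z) (hc0 z)
  _ = P * c z + Q * ((z : ℝ) * c z) := by ring

lemma tsum_weight_le (hc0 : ∀ z, 0 ≤ c z) (hc1 : HasSum c 1)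
    (hμ : HasSum (fun z : ℕ => (z : ℝ) * c z) μ) {f : ℕ → ℝ} {P Q : ℝ}
    (hf : Summable (fun z => c z * f z)) (hb : ∀ z : ℕ, f z ≤ P + Q * (z : ℝ)) :
    ∑' z, c z * f z ≤ P + Q * μ := by
  have h2 : HasSum (fun z => P * c z + Q * ((z : ℝ) * c z)) (P * 1 + Q * μ) :=
    (hc1.mul_left P).add (hμ.mul_left Q)
  have h3 := Summable.tsum_le_tsum (f := fun z => c z * f z)
    (g := fun z => P * c z + Q * ((z : ℝ) * c z))
    (fun (z : ℕ) => by
      calc c z * f z ≤ c z * (P + Q * z) := mul_le_mul_of_nonneg_left (hb z) (hc0 z)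
      _ = P * c z + Q * ((z : ℝ) * c z) := by ring) hf h2.summable
  rw [h2.tsum_eq] at h3
  linarith

lemma tsum_weight_ge (hc0 : ∀ z, 0 ≤ c z) (hc1 : HasSum c 1)
    (hμ : HasSum (fun z : ℕ => (z : ℝ) * c z) μ) {f : ℕ → ℝ} {P Q : ℝ}
    (hf : Summable (fun z => c z * f z)) (hb : ∀ z : ℕ, -(P + Q * (z : ℝ)) ≤ f z) :
    -(P + Q * μ) ≤ ∑' z, c z * f z := by
  have h2 : HasSum (fun z => -(P * c z + Q * ((z : ℝ) * c z))) (-(P * 1 + Q * μ)) :=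
    ((hc1.mul_left P).add (hμ.mul_left Q)).neg
  have h3 := Summable.tsum_le_tsum (f := fun z => -(P * c z + Q * ((z : ℝ) * c z)))
    (g := fun z => c z * f z)
    (fun (z : ℕ) => by
      calc -(P * c z + Q * ((z : ℝ) * c z)) = c z * (-(P + Q * z)) := by ring
      _ ≤ c z * f z := mul_le_mul_of_nonneg_left (hb z) (hc0 z)) h2.summable hf
  rw [h2.tsum_eq] at h3
  linarith

lemma tsum_weight_mono (hc0 : ∀ z, 0 ≤ c z) {f g : ℕ → ℝ}
    (hf : Summable (fun z => c z * f z)) (hg : Summable (fun z => c z * g z))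
    (hb : ∀ z, f z ≤ g z) :
    ∑' z, c z * f z ≤ ∑' z, c z * g z :=
  Summable.tsum_le_tsum (fun z => mul_le_mul_of_nonneg_left (hb z) (hc0 z)) hf hg

lemma tsum_weight_le_add (hc0 : ∀ z, 0 ≤ c z) (hc1 : HasSum c 1) {f g : ℕ → ℝ} {K : ℝ}
    (hf : Summable (fun z => c z * f z)) (hg : Summable (fun z => c z * g z))
    (hb : ∀ z, f z ≤ g z + K) :
    ∑' z, c z * f z ≤ (∑' z, c z * g z) + K := by
  have h2 : HasSum (fun z => c z * g z + K * c z) ((∑' z, c z * g z) + K * 1) :=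
    hg.hasSum.add (hc1.mul_left K)
  have h3 := Summable.tsum_le_tsum (f := fun z => c z * f z) (g := fun z => c z * g z + K * c z)
    (fun (z : ℕ) => by
      calc c z * f z ≤ c z * (g z + K) := mul_le_mul_of_nonneg_left (hb z) (hc0 z)
      _ = c z * g z + K * c z := by ring) hf h2.summable
  rw [h2.tsum_eq] at h3
  linarith

lemma tsum_weight_convex (hc0 : ∀ z, 0 ≤ c z) {f g h : ℕ → ℝ}
    (hf : Summable (fun z => c z * f z)) (hg : Summable (fun z => c z * g z))
    (hh : Summable (fun z => c z * h z))
    (hb : ∀ z, 2 * f z ≤ g z + h z) :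
    2 * ∑' z, c z * f z ≤ (∑' z, c z * g z) + ∑' z, c z * h z := by
  have h1 : (fun z => c z * (2 * f z)) = fun z => 2 * (c z * f z) := by
    funext z; ring
  have h2 := Summable.tsum_le_tsum (f := fun z => c z * (2 * f z)) (g := fun z => c z * g z + c z * h z)
    (fun (z : ℕ) => by
      calc c z * (2 * f z) ≤ c z * (g z + h z) := mul_le_mul_of_nonneg_left (hb z) (hc0 z)
      _ = c z * g z + c z * h z := by ring)
    (by rw [h1]; exact hf.mul_left 2) (hg.add hh)
  rw [h1, tsum_mul_left, Summable.tsum_add hg hh] at h2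
  exact h2

end Helpers

section InfTail

variable (f : ℤ → ℝ)

instance (x : ℤ) : Nonempty {a : ℤ // x ≤ a} := ⟨⟨x, le_rfl⟩⟩

lemma infTail_le (hbdd : ∀ x : ℤ, BddBelow (Set.range fun a : {a : ℤ // x ≤ a} => f a.1))
    {x b : ℤ} (h : x ≤ b) : (⨅ a : {a : ℤ // x ≤ a}, f a.1) ≤ f b :=
  ciInf_le (hbdd x) ⟨b, h⟩

lemma infTail_ge {x : ℤ} {m : ℝ} (hm : ∀ a, x ≤ a → m ≤ f a) :
    m ≤ ⨅ a : {a : ℤ // x ≤ a}, f a.1 :=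
  le_ciInf fun a => hm a.1 a.2

lemma infTail_mono (hbdd : ∀ x : ℤ, BddBelow (Set.range fun a : {a : ℤ // x ≤ a} => f a.1))
    (x : ℤ) : (⨅ a : {a : ℤ // x ≤ a}, f a.1) ≤ ⨅ a : {a : ℤ // x + 1 ≤ a}, f a.1 :=
  le_ciInf fun a => ciInf_le (hbdd x) ⟨a.1, le_trans (by linarith) a.2⟩

lemma infTail_slope (hbdd : ∀ x : ℤ, BddBelow (Set.range fun a : {a : ℤ // x ≤ a} => f a.1))
    {s : ℝ} (hs : ∀ a, f (a + 1) ≤ f a + s) (x : ℤ) :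
    (⨅ a : {a : ℤ // x + 1 ≤ a}, f a.1) ≤ (⨅ a : {a : ℤ // x ≤ a}, f a.1) + s := by
  have h1 : (⨅ a : {a : ℤ // x + 1 ≤ a}, f a.1) - s ≤ ⨅ a : {a : ℤ // x ≤ a}, f a.1 := by
    refine le_ciInf fun a => ?_
    have h2 : (⨅ a : {a : ℤ // x + 1 ≤ a}, f a.1) ≤ f (a.1 + 1) :=
      ciInf_le (hbdd (x + 1)) ⟨a.1 + 1, by linarith [a.2]⟩
    linarith [hs a.1]
  linarith

lemma infTail_convex (hconv : ∀ x, 2 * f x ≤ f (x + 1) + f (x - 1))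
    (hbdd : ∀ x : ℤ, BddBelow (Set.range fun a : {a : ℤ // x ≤ a} => f a.1)) (x : ℤ) :
    2 * (⨅ a : {a : ℤ // x ≤ a}, f a.1)
      ≤ (⨅ a : {a : ℤ // x + 1 ≤ a}, f a.1) + ⨅ a : {a : ℤ // x - 1 ≤ a}, f a.1 := by
  have hmono := infTail_mono f hbdd x
  rcases le_or_gt (⨅ a : {a : ℤ // x ≤ a}, f a.1) (f (x - 1)) with h | h
  · -- H (x-1) ≥ H x
    have h1 : (⨅ a : {a : ℤ // x ≤ a}, f a.1) ≤ ⨅ a : {a : ℤ // x - 1 ≤ a}, f a.1 := by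
      refine le_ciInf fun a => ?_
      rcases eq_or_lt_of_le a.2 with h2 | h2
      · rw [← h2]; exact h
      · exact infTail_le f hbdd (by linarith)
    linarith
  · -- f (x-1) < H x ≤ f x, so f is increasing from x - 1 on
    have hfx : f (x - 1) < f x := lt_of_lt_of_le h (infTail_le f hbdd le_rfl)
    have hinc : ∀ b : ℤ, x - 1 ≤ b → f b < f (b + 1) :=
      Int.le_induction (by rw [show x - 1 + 1 = x by ring]; exact hfx)
        (fun n hn ih => by
          have h2 := hconv (n + 1)
          rw [show n + 1 - 1 = n by ring] at h2
          linarith)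
    have hge : ∀ y : ℤ, x - 1 ≤ y → ∀ b : ℤ, y ≤ b → f y ≤ f b := fun y hy =>
      Int.le_induction le_rfl
        (fun n hn ih => le_trans ih (le_of_lt (hinc n (by linarith))))
    have hHx : (⨅ a : {a : ℤ // x ≤ a}, f a.1) = f x :=
      le_antisymm (infTail_le f hbdd le_rfl) (infTail_ge f fun a ha => hge x (by linarith) a ha)
    have hHx1 : (⨅ a : {a : ℤ // x + 1 ≤ a}, f a.1) = f (x + 1) :=
      le_antisymm (infTail_le f hbdd le_rfl) (infTail_ge f fun a ha => hge (x + 1) (by linarith) a ha)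
    have hHm1 : (⨅ a : {a : ℤ // x - 1 ≤ a}, f a.1) = f (x - 1) :=
      le_antisymm (infTail_le f hbdd le_rfl) (infTail_ge f fun a ha => hge (x - 1) (by linarith) a ha)
    rw [hHx, hHx1, hHm1]
    exact hconv x

set_option maxHeartbeats 1000000 in
lemma step_main (α0 β0 : ℝ) (hα0 : 0 < α0) (hβ0 : 0 < β0) (N : ℕ) (hN : 1 ≤ N)
    (cv ch cb : ℝ) (hcv : 0 ≤ cv) (hch : 0 < ch) (hcb : 0 < cb)
    (W : ℕ → ℤ → ℕ → ℝ) (t : ℕ) (U : ℝ) (hU : 0 ≤ U) (A B : ℝ) (hA : 0 ≤ A) (hB : 0 ≤ B)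
    (IH1 : ∀ (k : ℕ) (x : ℤ), 2 * W (t+1) x k ≤ W (t+1) (x+1) k + W (t+1) (x-1) k)
    (IH2 : ∀ (k : ℕ) (x : ℤ), W (t+1) x k ≤ W (t+1) (x+1) k + cv)
    (IH3 : ∀ (k : ℕ) (x : ℤ), W (t+1) (x+1) k ≤ W (t+1) x k + U)
    (IH4 : ∀ (k : ℕ) (x : ℤ), |W (t+1) x k| ≤ A * (1 + (k:ℝ)) + B * |(x:ℝ)|)
    (hWt : ∀ (x : ℤ) (k : ℕ), W t x k
      = (⨅ a : {a : ℤ // x ≤ a}, G α0 β0 N cv ch cb W t a.1 k) - cv * (x : ℝ)) :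
    (∀ (k : ℕ) (x : ℤ), 2 * W t x k ≤ W t (x+1) k + W t (x-1) k)
    ∧ (∀ (k : ℕ) (x : ℤ), W t x k ≤ W t (x+1) k + cv)
    ∧ (∀ (k : ℕ) (x : ℤ), W t (x+1) k ≤ W t x k + (ch + U))
    ∧ (∃ A' B' : ℝ, 0 ≤ A' ∧ 0 ≤ B' ∧
        ∀ (k : ℕ) (x : ℤ), |W t x k| ≤ A' * (1 + (k:ℝ)) + B' * |(x:ℝ)|) := by
  obtain ⟨p, hp⟩ : ∃ p : ℝ, p = pt β0 N t := ⟨_, rfl⟩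
  have hNt : (0:ℝ) < β0 + (N:ℝ) * t := by positivity
  have hp0 : 0 < p := by rw [hp, pt]; positivity
  have hp1 : p < 1 := by
    rw [hp, pt]
    rw [div_lt_one (by linarith)]
    linarith
  have hqp : (1 - p) / p = 1 / (β0 + (N:ℝ) * t) := by
    rw [hp, pt]
    rw [div_eq_div_iff (by positivity) (by positivity)]
    field_simp
    ring
  have hqp' : (1 - p) / p ≤ 1 / β0 := by
    rw [hqp]
    apply one_div_le_one_div_of_le hβ0
    have : (0:ℝ) ≤ (N:ℝ) * t := by positivity
    linarith
  obtain ⟨M, hM⟩ : ∃ M : ℝ, M = (N:ℝ) * (α0 + 1) / β0 := ⟨_, rfl⟩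
  have hM0 : 0 ≤ M := by rw [hM]; positivity
  -- lower bound for W (t+1)
  have wpos : ∀ (k' : ℕ) (y : ℤ), 0 ≤ y → W (t+1) 0 k' ≤ W (t+1) y k' + cv * (y:ℝ) := by
    intro k'
    refine fun y hy => Int.le_induction
      (motive := fun y _ => W (t+1) 0 k' ≤ W (t+1) y k' + cv * (y:ℝ)) ?_ ?_ y hy
    · simp
    · intro n hn ih
      have h2 := IH2 k' n
      push_cast
      push_cast at ih
      linarith
  have wneg : ∀ (k' : ℕ) (n : ℕ), W (t+1) 0 k' ≤ W (t+1) (-(n:ℤ)) k' + U * (n:ℝ) := by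
    intro k' n
    induction n with
    | zero => simp
    | succ n ih =>
      have h2 := IH3 k' (-(n:ℤ) - 1)
      rw [show -(n:ℤ) - 1 + 1 = -(n:ℤ) by ring] at h2
      have hc : (-(((n:ℕ)+1 : ℕ)):ℤ) = -(n:ℤ) - 1 := by push_cast; ring
      rw [hc]
      push_cast
      push_cast at ih
      linarith
  have wlb : ∀ (k' : ℕ) (y : ℤ),
      -(A * (1 + (k':ℝ)) + cv * max (y:ℝ) 0 + U * max (-(y:ℝ)) 0) ≤ W (t+1) y k' := by
    intro k' y
    have h0 := abs_le.mp (IH4 k' 0)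
    simp only [Int.cast_zero, abs_zero, mul_zero, add_zero] at h0
    rcases le_total 0 y with hy | hy
    · have h1 := wpos k' y hy
      have hy' : (0:ℝ) ≤ (y:ℝ) := by exact_mod_cast hy
      rw [max_eq_left hy', max_eq_right (by linarith)]
      linarith [h0.1]
    · have h1 := wneg k' (-y).toNat
      have hn : ((-y).toNat : ℤ) = -y := Int.toNat_of_nonneg (by linarith)
      have hn' : (((-y).toNat : ℕ) : ℝ) = -(y:ℝ) := by exact_mod_cast hn
      rw [show (-(((-y).toNat : ℕ) : ℤ)) = y by omega] at h1
      rw [hn'] at h1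
      have hy' : (y:ℝ) ≤ 0 := by exact_mod_cast hy
      rw [max_eq_right hy', max_eq_left (by linarith)]
      linarith [h0.1]
  obtain ⟨A', hA'⟩ : ∃ x : ℝ, x = A + (A + B + cb + U) * M := ⟨_, rfl⟩
  obtain ⟨B', hB'⟩ : ∃ x : ℝ, x = ch + cb + B + U + 2 * cv := ⟨_, rfl⟩
  have hA'0 : 0 ≤ A' := by rw [hA']; positivity
  have hB'0 : 0 ≤ B' := by rw [hB']; positivity
  have perk : ∀ k : ℕ,
      (∀ x : ℤ, 2 * W t x k ≤ W t (x+1) k + W t (x-1) k)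
      ∧ (∀ x : ℤ, W t x k ≤ W t (x+1) k + cv)
      ∧ (∀ x : ℤ, W t (x+1) k ≤ W t x k + (ch + U))
      ∧ (∀ x : ℤ, |W t x k| ≤ A' * (1 + (k:ℝ)) + B' * |(x:ℝ)|) := by
    intro k
    have hr : (0:ℝ) < α0 + (k:ℝ) := by positivity
    have hr' : (0:ℝ) ≤ ((N:ℝ) - 1) * (α0 + (k:ℝ)) := by
      have : (1:ℝ) ≤ (N:ℝ) := by exact_mod_cast hN
      nlinarith
    obtain ⟨c, hc⟩ : ∃ c : ℕ → ℝ, c = NB (α0 + (k:ℝ)) p := ⟨_, rfl⟩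
    obtain ⟨d, hd⟩ : ∃ d : ℕ → ℝ, d = NB (((N:ℝ) - 1) * (α0 + (k:ℝ))) p := ⟨_, rfl⟩
    obtain ⟨μc, hμc⟩ : ∃ x : ℝ, x = (α0 + (k:ℝ)) * (1 - p) / p := ⟨_, rfl⟩
    obtain ⟨μd, hμd⟩ : ∃ x : ℝ, x = ((N:ℝ) - 1) * (α0 + (k:ℝ)) * (1 - p) / p := ⟨_, rfl⟩
    have hc0 : ∀ z, 0 ≤ c z := by rw [hc]; exact NB_nonneg hr.le hp0 hp1
    have hd0 : ∀ z, 0 ≤ d z := by rw [hd]; exact NB_nonneg hr' hp0 hp1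
    have hcs : HasSum c 1 := by rw [hc]; exact NB_hasSum hr.le hp0 hp1
    have hds : HasSum d 1 := by rw [hd]; exact NB_hasSum hr' hp0 hp1
    have hcm : HasSum (fun z : ℕ => (z:ℝ) * c z) μc := by
      rw [hc, hμc]; exact NB_hasSum_mul hr.le hp0 hp1
    have hdm : HasSum (fun z : ℕ => (z:ℝ) * d z) μd := by
      rw [hd, hμd]; exact NB_hasSum_mul hr' hp0 hp1
    have hμc0 : 0 ≤ μc := by
      rw [hμc]; exact div_nonneg (mul_nonneg hr.le (by linarith)) hp0.le
    have hμd0 : 0 ≤ μd := by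
      rw [hμd]; exact div_nonneg (mul_nonneg hr' (by linarith)) hp0.le
    have hμM : μc + μd ≤ M * (1 + (k:ℝ)) := by
      have h1 : μc + μd = (N:ℝ) * (α0 + (k:ℝ)) * ((1 - p) / p) := by
        rw [hμc, hμd]; field_simp; ring
      have h2 : (0:ℝ) ≤ (N:ℝ) * (α0 + (k:ℝ)) := by positivity
      have h3 : (N:ℝ) * (α0 + (k:ℝ)) * ((1 - p) / p) ≤ (N:ℝ) * (α0 + (k:ℝ)) * (1 / β0) :=
        mul_le_mul_of_nonneg_left hqp' h2
      have h4 : (N:ℝ) * (α0 + (k:ℝ)) * (1 / β0) ≤ M * (1 + (k:ℝ)) := by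
        rw [show M * (1 + (k:ℝ)) = (N:ℝ) * (α0 + 1) * (1 + (k:ℝ)) * (1 / β0) by rw [hM]; ring]
        apply mul_le_mul_of_nonneg_right ?_ (by positivity)
        have h5 : (1:ℝ) ≤ (N:ℝ) := by exact_mod_cast hN
        nlinarith [(by positivity : (0:ℝ) ≤ (k:ℝ)), mul_nonneg (mul_nonneg (by positivity : (0:ℝ) ≤ (N:ℝ)) hα0.le) (by positivity : (0:ℝ) ≤ (k:ℝ))]
      linarith
    -- definitions
    obtain ⟨Sh, hSh⟩ : ∃ F : ℤ → ℝ, F = fun a : ℤ => ∑' z : ℕ, c z * max ((a:ℝ) - z) 0 := ⟨_, rfl⟩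
    obtain ⟨Sb, hSb⟩ : ∃ F : ℤ → ℝ, F = fun a : ℤ => ∑' z : ℕ, c z * max ((z:ℝ) - a) 0 := ⟨_, rfl⟩
    obtain ⟨e, he⟩ : ∃ F : ℤ → ℕ → ℝ,
      F = fun (a : ℤ) (z : ℕ) => ∑' κ : ℕ, d κ * W (t+1) (a - z) (k + z + κ) := ⟨_, rfl⟩
    obtain ⟨E, hE⟩ : ∃ F : ℤ → ℝ, F = fun a : ℤ => ∑' z : ℕ, c z * e a z := ⟨_, rfl⟩
    obtain ⟨g, hg⟩ : ∃ F : ℤ → ℝ, F = fun a : ℤ => G α0 β0 N cv ch cb W t a k := ⟨_, rfl⟩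
    have hgdef : ∀ a : ℤ, g a = cv * (a:ℝ) + ch * Sh a + cb * Sb a + E a := by
      intro a
      rw [hg, hSh, hSb, hE]
      simp only [G, EZK, ← hp, ← hc, ← hd]
      congr 2
      funext z
      rw [he]
      rw [← tsum_mul_left]
      congr 1
      funext κ
      ring
    -- pointwise bound on W(t+1) inside the double sum
    have hWb : ∀ (a : ℤ) (z κ : ℕ), |W (t+1) (a - z) (k+z+κ)|
        ≤ (A * (1 + (k:ℝ) + z) + B * (|(a:ℝ)| + z)) + A * κ := by
      intro a z κ
      have h4 := IH4 (k+z+κ) (a - z)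
      have habs : |((a - (z:ℤ) : ℤ) : ℝ)| ≤ |(a:ℝ)| + (z:ℝ) := by
        push_cast
        calc |(a:ℝ) - z| ≤ |(a:ℝ)| + |(z:ℝ)| := abs_sub _ _
        _ = |(a:ℝ)| + z := by rw [abs_of_nonneg (by positivity : (0:ℝ) ≤ (z:ℝ))]
      push_cast at h4 habs ⊢
      have h5 := mul_le_mul_of_nonneg_left habs hB
      linarith
    have hsum_in : ∀ (a : ℤ) (z : ℕ),
        Summable (fun κ : ℕ => d κ * W (t+1) (a - z) (k+z+κ)) := by
      intro a z
      exact summable_weight hd0 hds.summable hdm.summable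
        (P := A * (1 + (k:ℝ) + z) + B * (|(a:ℝ)| + z)) (Q := A) (hWb a z)
    have he_bound : ∀ (a : ℤ) (z : ℕ),
        |e a z| ≤ (A * (1 + (k:ℝ) + μd) + B * |(a:ℝ)|) + (A + B) * z := by
      intro a z
      have hub := tsum_weight_le (f := fun κ : ℕ => W (t+1) (a - z) (k+z+κ))
        hd0 hds hdm (hsum_in a z)
        (P := A * (1 + (k:ℝ) + z) + B * (|(a:ℝ)| + z)) (Q := A)
        (fun κ => (abs_le.mp (hWb a z κ)).2)
      have hlb := tsum_weight_ge (f := fun κ : ℕ => W (t+1) (a - z) (k+z+κ))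
        hd0 hds hdm (hsum_in a z)
        (P := A * (1 + (k:ℝ) + z) + B * (|(a:ℝ)| + z)) (Q := A)
        (fun κ => (abs_le.mp (hWb a z κ)).1)
      rw [he]
      rw [abs_le]
      constructor
      · linarith
      · linarith
    have hsum_out : ∀ a : ℤ, Summable (fun z : ℕ => c z * e a z) := fun a =>
      summable_weight hc0 hcs.summable hcm.summable
        (P := A * (1 + (k:ℝ) + μd) + B * |(a:ℝ)|) (Q := A + B) (he_bound a)
    have hE_ub : ∀ a : ℤ, E a ≤ (A * (1 + (k:ℝ) + μd) + B * |(a:ℝ)|) + (A + B) * μc := by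
      intro a
      rw [hE]
      exact tsum_weight_le hc0 hcs hcm (hsum_out a) (fun z => (abs_le.mp (he_bound a z)).2)
    -- convexity of E
    have he_conv : ∀ (a : ℤ) (z : ℕ), 2 * e a z ≤ e (a+1) z + e (a-1) z := by
      intro a z
      simp only [he]
      refine tsum_weight_convex hd0 (hsum_in a z) (hsum_in (a+1) z) (hsum_in (a-1) z) ?_
      intro κ
      have h1 := IH1 (k+z+κ) (a - z)
      rw [show a - (z:ℤ) + 1 = a + 1 - z by ring, show a - (z:ℤ) - 1 = a - 1 - z by ring] at h1
      exact h1
    have hE_conv : ∀ a : ℤ, 2 * E a ≤ E (a+1) + E (a-1) := by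
      intro a
      simp only [hE]
      exact tsum_weight_convex hc0 (hsum_out a) (hsum_out (a+1)) (hsum_out (a-1)) (he_conv a)
    -- slope of E
    have he_slope : ∀ (a : ℤ) (z : ℕ), e (a+1) z ≤ e a z + U := by
      intro a z
      simp only [he]
      refine tsum_weight_le_add hd0 hds (hsum_in (a+1) z) (hsum_in a z) ?_
      intro κ
      have h1 := IH3 (k+z+κ) (a - z)
      rw [show a - (z:ℤ) + 1 = a + 1 - z by ring] at h1
      exact h1
    have hE_slope : ∀ a : ℤ, E (a+1) ≤ E a + U := by
      intro a
      simp only [hE]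
      exact tsum_weight_le_add hc0 hcs (hsum_out (a+1)) (hsum_out a) (he_slope a)
    -- refined lower bound for e
    have he_lb2 : ∀ (a : ℤ) (z : ℕ),
        -(A * (1 + (k:ℝ) + z + μd) + cv * max ((a:ℝ) - z) 0 + U * max ((z:ℝ) - a) 0)
          ≤ e a z := by
      intro a z
      have hpt : ∀ κ : ℕ, -((A * (1 + (k:ℝ) + z) + cv * max ((a:ℝ) - z) 0
          + U * max ((z:ℝ) - a) 0) + A * κ) ≤ W (t+1) (a - z) (k+z+κ) := by
        intro κ
        have hw := wlb (k+z+κ) (a - z)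
        push_cast at hw
        rw [show -((a:ℝ) - (z:ℝ)) = (z:ℝ) - (a:ℝ) by ring] at hw
        push_cast
        linarith
      have h1 := tsum_weight_ge hd0 hds hdm (hsum_in a z)
        (P := A * (1 + (k:ℝ) + z) + cv * max ((a:ℝ) - z) 0 + U * max ((z:ℝ) - a) 0)
        (Q := A) hpt
      rw [he]
      linarith
    -- Sh and Sb basics
    have hSh_sum : ∀ a : ℤ, Summable (fun z : ℕ => c z * max ((a:ℝ) - z) 0) := by
      intro a
      refine summable_weight hc0 hcs.summable hcm.summable (P := |(a:ℝ)|) (Q := 0) ?_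
      intro z
      rw [abs_of_nonneg (le_max_right _ _)]
      rw [zero_mul, add_zero]
      exact max_le (by linarith [le_abs_self (a:ℝ), (by positivity : (0:ℝ) ≤ (z:ℝ))]) (abs_nonneg _)
    have hSb_sum : ∀ a : ℤ, Summable (fun z : ℕ => c z * max ((z:ℝ) - a) 0) := by
      intro a
      refine summable_weight hc0 hcs.summable hcm.summable (P := |(a:ℝ)|) (Q := 1) ?_
      intro z
      rw [abs_of_nonneg (le_max_right _ _)]
      exact max_le (by linarith [neg_abs_le (a:ℝ)]) (by positivity)
    have hSh_nonneg : ∀ a : ℤ, 0 ≤ Sh a := by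
      intro a
      rw [hSh]
      exact tsum_nonneg fun z => mul_nonneg (hc0 z) (le_max_right _ _)
    have hSb_nonneg : ∀ a : ℤ, 0 ≤ Sb a := by
      intro a
      rw [hSb]
      exact tsum_nonneg fun z => mul_nonneg (hc0 z) (le_max_right _ _)
    have hSh_le : ∀ a : ℤ, Sh a ≤ max (a:ℝ) 0 := by
      intro a
      rw [hSh]
      have := tsum_weight_le hc0 hcs hcm (hSh_sum a) (P := max (a:ℝ) 0) (Q := 0)
        (fun z => by
          rw [zero_mul, add_zero]
          exact max_le (by linarith [le_max_left (a:ℝ) 0, (by positivity : (0:ℝ) ≤ (z:ℝ))])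
            (le_max_right _ _))
      linarith
    have hSb_le : ∀ x a : ℤ, x ≤ a → Sb a ≤ max (-(x:ℝ)) 0 + μc := by
      intro x a hxa
      have hxa' : (x:ℝ) ≤ (a:ℝ) := by exact_mod_cast hxa
      rw [hSb]
      have := tsum_weight_le hc0 hcs hcm (hSb_sum a) (P := max (-(x:ℝ)) 0) (Q := 1)
        (fun z => max_le (by linarith [le_max_left (-(x:ℝ)) 0]) (by positivity))
      linarith
    -- convexity and slopes of Sh, Sb
    have hSh_conv : ∀ a : ℤ, 2 * Sh a ≤ Sh (a+1) + Sh (a-1) := by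
      intro a
      simp only [hSh]
      refine tsum_weight_convex hc0 (hSh_sum a) (hSh_sum (a+1)) (hSh_sum (a-1)) ?_
      intro z
      have h1 := two_mul_max_le ((a:ℝ) - z)
      rw [show (a:ℝ) - z + 1 = ((a+1 : ℤ):ℝ) - z by push_cast; ring,
        show (a:ℝ) - z - 1 = ((a-1 : ℤ):ℝ) - z by push_cast; ring] at h1
      exact h1
    have hSb_conv : ∀ a : ℤ, 2 * Sb a ≤ Sb (a+1) + Sb (a-1) := by
      intro a
      simp only [hSb]
      refine tsum_weight_convex hc0 (hSb_sum a) (hSb_sum (a+1)) (hSb_sum (a-1)) ?_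
      intro z
      have h1 := two_mul_max_le ((z:ℝ) - a)
      rw [show (z:ℝ) - a + 1 = ((z:ℝ)) - ((a-1 : ℤ):ℝ) by push_cast; ring,
        show (z:ℝ) - a - 1 = ((z:ℝ)) - ((a+1 : ℤ):ℝ) by push_cast; ring] at h1
      linarith
    have hSh_slope : ∀ a : ℤ, Sh (a+1) ≤ Sh a + 1 := by
      intro a
      simp only [hSh]
      refine tsum_weight_le_add hc0 hcs (hSh_sum (a+1)) (hSh_sum a) ?_
      intro z
      have h1 := max_add_one_le ((a:ℝ) - z)
      rw [show (a:ℝ) - z + 1 = ((a+1 : ℤ):ℝ) - z by push_cast; ring] at h1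
      exact h1
    have hSb_slope : ∀ a : ℤ, Sb (a+1) ≤ Sb a := by
      intro a
      simp only [hSb]
      refine tsum_weight_mono hc0 (hSb_sum (a+1)) (hSb_sum a) ?_
      intro z
      refine max_le_max (by push_cast; linarith) le_rfl
    -- properties of g
    have hg_conv : ∀ a : ℤ, 2 * g a ≤ g (a+1) + g (a-1) := by
      intro a
      rw [hgdef a, hgdef (a+1), hgdef (a-1)]
      have h1 := mul_le_mul_of_nonneg_left (hSh_conv a) hch.le
      have h2 := mul_le_mul_of_nonneg_left (hSb_conv a) hcb.le
      have h3 := hE_conv a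
      push_cast
      ring_nf
      ring_nf at h1 h2 h3
      linarith
    have hg_slope : ∀ a : ℤ, g (a+1) ≤ g a + (cv + ch + U) := by
      intro a
      rw [hgdef a, hgdef (a+1)]
      have h1 := mul_le_mul_of_nonneg_left (hSh_slope a) hch.le
      have h2 := mul_le_mul_of_nonneg_left (hSb_slope a) hcb.le
      have h3 := hE_slope a
      push_cast
      ring_nf
      ring_nf at h1 h2 h3
      linarith
    -- lower bound on E and g
    have hE_lb : ∀ a : ℤ, -((A * (1 + (k:ℝ) + μd) + A * μc) + cv * Sh a + U * Sb a) ≤ E a := by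
      intro a
      have hF : HasSum (fun z : ℕ => c z * (A * (1 + (k:ℝ) + z + μd)
          + cv * max ((a:ℝ) - z) 0 + U * max ((z:ℝ) - a) 0))
          ((A * (1 + (k:ℝ) + μd)) + A * μc + cv * Sh a + U * Sb a) := by
        have q1 : HasSum (fun z : ℕ => (A * (1 + (k:ℝ) + μd)) * c z) ((A * (1 + (k:ℝ) + μd)) * 1) :=
          hcs.mul_left _
        have q2 : HasSum (fun z : ℕ => A * ((z:ℝ) * c z)) (A * μc) := hcm.mul_left A
        have q3 : HasSum (fun z : ℕ => cv * (c z * max ((a:ℝ) - z) 0)) (cv * Sh a) := by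
          rw [hSh]
          exact (hSh_sum a).hasSum.mul_left cv
        have q4 : HasSum (fun z : ℕ => U * (c z * max ((z:ℝ) - a) 0)) (U * Sb a) := by
          rw [hSb]
          exact (hSb_sum a).hasSum.mul_left U
        have q := ((q1.add q2).add q3).add q4
        rw [mul_one] at q
        convert q using 2 with z
        ring
      have hpt : ∀ z : ℕ, -(c z * (A * (1 + (k:ℝ) + z + μd)
          + cv * max ((a:ℝ) - z) 0 + U * max ((z:ℝ) - a) 0)) ≤ c z * e a z := by
        intro z
        have := mul_le_mul_of_nonneg_left (he_lb2 a z) (hc0 z)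
        calc -(c z * (A * (1 + (k:ℝ) + z + μd) + cv * max ((a:ℝ) - z) 0
            + U * max ((z:ℝ) - a) 0))
            = c z * (-(A * (1 + (k:ℝ) + z + μd) + cv * max ((a:ℝ) - z) 0
              + U * max ((z:ℝ) - a) 0)) := by ring
        _ ≤ c z * e a z := by
            refine mul_le_mul_of_nonneg_left ?_ (hc0 z)
            have h5 := he_lb2 a z
            linarith
      have h6 := Summable.tsum_le_tsum hpt hF.neg.summable (hsum_out a)
      rw [hF.neg.tsum_eq] at h6
      rw [hE]
      linarith
    have hg_lb : ∀ x a : ℤ, x ≤ a →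
        -(A * (1 + (k:ℝ) + μd + μc) + U * (μc + max (-(x:ℝ)) 0) + cv * max (-(x:ℝ)) 0)
          ≤ g a := by
      intro x a hxa
      rw [hgdef a]
      have h1 := mul_le_mul_of_nonneg_left (hSh_le a) hcv
      have h2 := mul_le_mul_of_nonneg_left (hSb_le x a hxa) hU
      have h3 := mul_nonneg hch.le (hSh_nonneg a)
      have h4 := mul_nonneg hcb.le (hSb_nonneg a)
      have h5 : cv * max (-(a:ℝ)) 0 ≤ cv * max (-(x:ℝ)) 0 := by
        refine mul_le_mul_of_nonneg_left (max_le_max ?_ le_rfl) hcv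
        have : (x:ℝ) ≤ (a:ℝ) := by exact_mod_cast hxa
        linarith
      have h6 : cv * (a:ℝ) = cv * (max (a:ℝ) 0 - max (-(a:ℝ)) 0) := by
        rw [← self_eq_max_sub]
      have h7 := hE_lb a
      linarith
    -- bounded-below of g on tails, and W formulas
    have hbdd : ∀ x : ℤ, BddBelow (Set.range fun a : {a : ℤ // x ≤ a} => g a.1) := by
      intro x
      refine ⟨-(A * (1 + (k:ℝ) + μd + μc) + U * (μc + max (-(x:ℝ)) 0) + cv * max (-(x:ℝ)) 0), ?_⟩
      rintro y ⟨⟨a, ha⟩, rfl⟩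
      exact hg_lb x a ha
    have hWH : ∀ x : ℤ, W t x k = (⨅ a : {a : ℤ // x ≤ a}, g a.1) - cv * (x:ℝ) := by
      intro x
      simp only [hg]
      exact hWt x k
    refine ⟨?_, ?_, ?_, ?_⟩
    · intro x
      have h2 := infTail_convex g hg_conv hbdd x
      rw [hWH x, hWH (x+1), hWH (x-1)]
      push_cast
      linarith
    · intro x
      have h2 := infTail_mono g hbdd x
      rw [hWH x, hWH (x+1)]
      push_cast
      linarith
    · intro x
      have h2 := infTail_slope g hbdd hg_slope x
      rw [hWH x, hWH (x+1)]
      push_cast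
      linarith
    · intro x
      rw [hWH x]
      have hub0 := infTail_le g hbdd (le_refl x)
      have hub1 : g x ≤ cv * (x:ℝ) + ch * |(x:ℝ)| + cb * (max (-(x:ℝ)) 0 + μc)
          + ((A * (1 + (k:ℝ) + μd) + B * |(x:ℝ)|) + (A + B) * μc) := by
        rw [hgdef x]
        have h1 : ch * Sh x ≤ ch * |(x:ℝ)| := by
          refine mul_le_mul_of_nonneg_left ((hSh_le x).trans ?_) hch.le
          exact max_le (le_abs_self _) (abs_nonneg _)
        have h2 := mul_le_mul_of_nonneg_left (hSb_le x x le_rfl) hcb.le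
        have h3 := hE_ub x
        linarith
      have hlb0 : -(A * (1 + (k:ℝ) + μd + μc) + U * (μc + max (-(x:ℝ)) 0)
          + cv * max (-(x:ℝ)) 0) ≤ ⨅ a : {a : ℤ // x ≤ a}, g a.1 :=
        infTail_ge g fun a ha => hg_lb x a ha
      have hmx : max (-(x:ℝ)) 0 ≤ |(x:ℝ)| := max_le (neg_le_abs _) (abs_nonneg _)
      have hcoef := mul_le_mul_of_nonneg_left hμM
        (show (0:ℝ) ≤ A + B + cb + U by positivity)
      have hax : (0:ℝ) ≤ |(x:ℝ)| := abs_nonneg _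
      have hk1 : (0:ℝ) ≤ 1 + (k:ℝ) := by positivity
      rw [abs_le]
      constructor
      · -- lower bound
        have h9 : cv * (x:ℝ) ≤ cv * |(x:ℝ)| := mul_le_mul_of_nonneg_left (le_abs_self _) hcv
        have h10 := mul_le_mul_of_nonneg_left hmx (show (0:ℝ) ≤ U + cv by linarith)
        have h11 : (A + U) * μc + A * μd ≤ (A + B + cb + U) * (μc + μd) := by
          have q1 := mul_nonneg (show (0:ℝ) ≤ B + cb by positivity) hμc0
          have q2 := mul_nonneg (show (0:ℝ) ≤ B + cb + U by positivity) hμd0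
          nlinarith
        have h12 := mul_nonneg (show (0:ℝ) ≤ ch + cb + B by positivity) hax
        rw [hA', hB']
        nlinarith [hlb0]
      · -- upper bound
        have h9 := mul_le_mul_of_nonneg_left hmx hcb.le
        have h11 : (A + B + cb) * μc + A * μd ≤ (A + B + cb + U) * (μc + μd) := by
          have q1 := mul_nonneg hU hμc0
          have q2 := mul_nonneg (show (0:ℝ) ≤ B + cb + U by positivity) hμd0
          nlinarith
        have h12 := mul_nonneg (show (0:ℝ) ≤ U + 2 * cv by linarith) hax
        rw [hA', hB']
        nlinarith [hub0, hub1]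
  exact ⟨fun k x => (perk k).1 x, fun k x => (perk k).2.1 x, fun k x => (perk k).2.2.1 x,
    A', B', hA'0, hB'0, fun k x => (perk k).2.2.2 x⟩

set_option maxHeartbeats 1000000 in
/-- The single-warehouse value function `W_t(·,k)` is (discretely) convex in `x`. -/
theorem value_convex
    (α0 β0 : ℝ) (hα0 : 0 < α0) (hβ0 : 0 < β0)
    (N T : ℕ) (hN : 1 ≤ N) (hT : 1 ≤ T)
    (cv ch cb : ℝ) (hcv : 0 ≤ cv) (hch : 0 < ch) (hcb : 0 < cb)
    (W : ℕ → ℤ → ℕ → ℝ)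
    (hWT : ∀ x k, W T x k = 0)
    (hW : ∀ t, t < T → ∀ x k,
      W t x k = (⨅ a : {a : ℤ // x ≤ a}, G α0 β0 N cv ch cb W t a.1 k) - cv * (x : ℝ)) :
    ∀ t ≤ T, ∀ (k : ℕ) (x : ℤ), 2 * W t x k ≤ W t (x + 1) k + W t (x - 1) k := by
  have key : ∀ d t : ℕ, t + d = T →
      (∀ (k : ℕ) (x : ℤ), 2 * W t x k ≤ W t (x+1) k + W t (x-1) k)
      ∧ (∀ (k : ℕ) (x : ℤ), W t x k ≤ W t (x+1) k + cv)
      ∧ (∀ (k : ℕ) (x : ℤ), W t (x+1) k ≤ W t x k + ((T - t : ℕ) : ℝ) * ch)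
      ∧ (∃ A B : ℝ, 0 ≤ A ∧ 0 ≤ B ∧
          ∀ (k : ℕ) (x : ℤ), |W t x k| ≤ A * (1 + (k:ℝ)) + B * |(x:ℝ)|) := by
    intro d
    induction d with
    | zero =>
      intro t ht
      have ht' : t = T := by omega
      subst ht'
      refine ⟨?_, ?_, ?_, 0, 0, le_rfl, le_rfl, ?_⟩ <;> intro k x <;> simp [hWT]
      · exact hcv
    | succ d ih =>
      intro t ht
      obtain ⟨IH1, IH2, IH3, A, B, hA, hB, IH4⟩ := ih (t+1) (by omega)
      have htT : t < T := by omega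
      have hU : (0:ℝ) ≤ ((T - (t+1) : ℕ) : ℝ) * ch := by positivity
      obtain ⟨S1, S2, S3, A', B', hA', hB', S4⟩ :=
        step_main α0 β0 hα0 hβ0 N hN cv ch cb hcv hch hcb W t
          (((T - (t+1) : ℕ) : ℝ) * ch) hU A B hA hB IH1 IH2 IH3 IH4
          (fun x k => hW t htT x k)
      refine ⟨S1, S2, ?_, A', B', hA', hB', S4⟩
      intro k x
      have h3 := S3 k x
      have hc : ((T - t : ℕ) : ℝ) = ((T - (t+1) : ℕ) : ℝ) + 1 := by
        have h4 : T - t = (T - (t+1)) + 1 := by omega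
        rw [h4]
        push_cast
        ring
      rw [hc]
      ring_nf
      ring_nf at h3
      linarith
  intro t ht k x
  exact (key (T - t) t (by omega)).1 k x
end InfTail
end
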